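/- arXiv:1308.4732 — 7 statements merged into one kernel-verified Lean document; each statement's English description precedes it below -/
import Mathlib

section
/- Complementary-dual principle: Let ζ̄ = (τ̄, σ̄) ∈ 𝓢ₐ be a critical point of Π^d (i.e. it satisfies the stationarity equations ½fᵀGₐ(ζ̄)⁻¹QᵢGₐ(ζ̄)⁻¹f + dᵢ = (1/β)log(τ̄ᵢ/(1 − Σₖτ̄ₖ)) for i = 1,…,p and ½fᵀGₐ(ζ̄)⁻¹BᵢGₐ(ζ̄)⁻¹f + cᵢ = σ̄ᵢ/αᵢ for i = 1,…,r), and set x̄ = Gₐ(ζ̄)⁻¹f. Then x̄ is a critical point of Π, i.e. the gradient of Π vanishes at x̄, and Π(x̄) = Π^d(ζ̄). -/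
open Matrix

noncomputable def dotCLM {n : ℕ} (w : Fin n → ℝ) : (Fin n → ℝ) →L[ℝ] ℝ :=
  LinearMap.toContinuousLinearMap
    { toFun := fun v => w ⬝ᵥ v
      map_add' := fun a b => dotProduct_add w a b
      map_smul' := fun r a => by simp }

@[simp] lemma dotCLM_apply {n : ℕ} (w v : Fin n → ℝ) : dotCLM w v = w ⬝ᵥ v := rfl

noncomputable def bilCLM {n : ℕ} (M : Matrix (Fin n) (Fin n) ℝ) :
    (Fin n → ℝ) →L[ℝ] (Fin n → ℝ) →L[ℝ] ℝ :=
  LinearMap.toContinuousLinearMap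
    { toFun := fun u => dotCLM (Mᵀ *ᵥ u)
      map_add' := fun a b => by ext v; simp [Matrix.mulVec_add, add_dotProduct]
      map_smul' := fun r a => by ext v; simp [Matrix.mulVec_smul, smul_dotProduct] }

@[simp] lemma bilCLM_apply {n : ℕ} (M : Matrix (Fin n) (Fin n) ℝ) (u v : Fin n → ℝ) :
    bilCLM M u v = u ⬝ᵥ M *ᵥ v := by
  show (Mᵀ *ᵥ u) ⬝ᵥ v = u ⬝ᵥ M *ᵥ v
  rw [Matrix.mulVec_transpose, ← Matrix.dotProduct_mulVec]

lemma hasFDerivAt_quad {n : ℕ} (M : Matrix (Fin n) (Fin n) ℝ) (x : Fin n → ℝ) :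
    HasFDerivAt (fun y : Fin n → ℝ => y ⬝ᵥ M *ᵥ y) (dotCLM (Mᵀ *ᵥ x + M *ᵥ x)) x := by
  have h := (bilCLM M).isBoundedBilinearMap
  have h2 := h.hasFDerivAt (x, x)
  have h3 : HasFDerivAt (fun y : Fin n → ℝ => (y, y))
      ((ContinuousLinearMap.id ℝ (Fin n → ℝ)).prod (ContinuousLinearMap.id ℝ (Fin n → ℝ))) x :=
    ((ContinuousLinearMap.id ℝ (Fin n → ℝ)).prod (ContinuousLinearMap.id ℝ (Fin n → ℝ))).hasFDerivAt
  have h4 : HasFDerivAt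
      ((fun p : (Fin n → ℝ) × (Fin n → ℝ) => bilCLM M p.1 p.2) ∘ (fun y => (y, y)))
      ((h.deriv (x, x)).comp
        ((ContinuousLinearMap.id ℝ (Fin n → ℝ)).prod (ContinuousLinearMap.id ℝ (Fin n → ℝ)))) x :=
    HasFDerivAt.comp x h2 h3
  have heq : (fun y : Fin n → ℝ => y ⬝ᵥ M *ᵥ y)
      = (fun p : (Fin n → ℝ) × (Fin n → ℝ) => bilCLM M p.1 p.2) ∘ (fun y => (y, y)) := by
    funext y; simp [Function.comp]
  rw [heq]
  convert h4 using 1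
  · rfl
  ext v
  simp [h.deriv_apply, Matrix.dotProduct_mulVec, Matrix.mulVec_transpose, add_dotProduct]
  rw [← Matrix.dotProduct_mulVec, dotProduct_comm]

lemma sum_mulVec' {n : ℕ} {ι : Type*} (s : Finset ι) (M : ι → Matrix (Fin n) (Fin n) ℝ)
    (x : Fin n → ℝ) : (∑ i ∈ s, M i) *ᵥ x = ∑ i ∈ s, M i *ᵥ x := by
  induction s using Finset.cons_induction with
  | empty => simp
  | cons a s h ih => simp [Finset.sum_cons, Matrix.add_mulVec, ih]

lemma sum_dotProduct' {n : ℕ} {ι : Type*} (s : Finset ι) (u : ι → Fin n → ℝ)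
    (v : Fin n → ℝ) : (∑ i ∈ s, u i) ⬝ᵥ v = ∑ i ∈ s, u i ⬝ᵥ v := by
  induction s using Finset.cons_induction with
  | empty => simp
  | cons a s h ih => simp [Finset.sum_cons, add_dotProduct, ih]


/-- **Complementary-dual principle** (Theorem 1 of Chen–Gao).
If `ζ̄ ∈ 𝓢ₐ` is a critical point of the canonical dual function `Π^d`
(i.e. it satisfies the explicit stationarity equations), then
`x̄ = Gₐ(ζ̄)⁻¹ f` is a critical point of the primal function `Π`
(its gradient vanishes at `x̄`) and `Π(x̄) = Π^d(ζ̄)`. -/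
theorem complementary_dual_principle
    {n p r : ℕ} (hn : 0 < n) (hp : 0 < p) (hr : 0 < r)
    (A : Matrix (Fin n) (Fin n) ℝ) (hA : A.IsSymm)
    (Q : Fin p → Matrix (Fin n) (Fin n) ℝ) (hQ : ∀ i, (Q i).IsSymm)
    (B : Fin r → Matrix (Fin n) (Fin n) ℝ) (hB : ∀ i, (B i).IsSymm)
    (f : Fin n → ℝ) (d : Fin p → ℝ) (c : Fin r → ℝ)
    (β : ℝ) (hβ : 0 < β) (α : Fin r → ℝ) (hα : ∀ i, 0 < α i)
    (Prim : (Fin n → ℝ) → ℝ)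
    (hPrim : Prim = fun x => (1/2) * (x ⬝ᵥ A.mulVec x) - f ⬝ᵥ x
        + (1/β) * Real.log (1 + ∑ i, Real.exp (β * ((1/2) * (x ⬝ᵥ (Q i).mulVec x) + d i)))
        + ∑ i, (α i / 2) * ((1/2) * (x ⬝ᵥ (B i).mulVec x) + c i)^2)
    (Ga : ((Fin p ⊕ Fin r) → ℝ) → Matrix (Fin n) (Fin n) ℝ)
    (hGa : Ga = fun ζ => A + ∑ i, ζ (Sum.inl i) • Q i + ∑ i, ζ (Sum.inr i) • B i)
    (Dual : ((Fin p ⊕ Fin r) → ℝ) → ℝ)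
    (hDual : Dual = fun ζ => -(1/2) * (f ⬝ᵥ (Ga ζ)⁻¹.mulVec f)
        - ((1/β) * ((∑ i, ζ (Sum.inl i) * Real.log (ζ (Sum.inl i)))
            + (1 - ∑ i, ζ (Sum.inl i)) * Real.log (1 - ∑ i, ζ (Sum.inl i)))
          - ∑ i, d i * ζ (Sum.inl i))
        - (∑ i, (ζ (Sum.inr i))^2 / (2 * α i) - ∑ i, c i * ζ (Sum.inr i)))
    (zb : (Fin p ⊕ Fin r) → ℝ)
    (hpos : ∀ i, 0 < zb (Sum.inl i)) (hsum : ∑ i, zb (Sum.inl i) < 1)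
    (hdet : (Ga zb).det ≠ 0)
    (hcrit1 : ∀ i, (1/2) * (f ⬝ᵥ ((Ga zb)⁻¹ * Q i * (Ga zb)⁻¹).mulVec f) + d i
        = (1/β) * Real.log (zb (Sum.inl i) / (1 - ∑ j, zb (Sum.inl j))))
    (hcrit2 : ∀ i, (1/2) * (f ⬝ᵥ ((Ga zb)⁻¹ * B i * (Ga zb)⁻¹).mulVec f) + c i
        = zb (Sum.inr i) / α i)
    (xb : Fin n → ℝ) (hxb : xb = (Ga zb)⁻¹.mulVec f) :
    fderiv ℝ Prim xb = 0 ∧ Prim xb = Dual zb := by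
  have haA : Aᵀ = A := hA.eq
  have haQ : ∀ i, (Q i)ᵀ = Q i := fun i => (hQ i).eq
  have haB : ∀ i, (B i)ᵀ = B i := fun i => (hB i).eq
  have hGsym : (Ga zb)ᵀ = Ga zb := by
    rw [hGa]
    simp only [Matrix.transpose_add, Matrix.transpose_sum, Matrix.transpose_smul, haA, haQ, haB]
  have hdet' : IsUnit (Ga zb).det := isUnit_iff_ne_zero.mpr hdet
  have hGinvsym : ((Ga zb)⁻¹)ᵀ = (Ga zb)⁻¹ := by
    rw [Matrix.transpose_nonsing_inv, hGsym]
  have hGx : Ga zb *ᵥ xb = f := by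
    rw [hxb, Matrix.mulVec_mulVec, Matrix.mul_nonsing_inv _ hdet', Matrix.one_mulVec]
  have hquad : ∀ M : Matrix (Fin n) (Fin n) ℝ,
      xb ⬝ᵥ M *ᵥ xb = f ⬝ᵥ ((Ga zb)⁻¹ * M * (Ga zb)⁻¹) *ᵥ f := by
    intro M
    rw [hxb, Matrix.mulVec_mulVec]
    have h1 : (Ga zb)⁻¹ *ᵥ f = f ᵥ* (Ga zb)⁻¹ := by
      rw [← hGinvsym, Matrix.mulVec_transpose, hGinvsym]
    rw [h1, ← Matrix.dotProduct_mulVec, Matrix.mulVec_mulVec, ← Matrix.mul_assoc]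
  -- scalar facts
  have ht : 0 < 1 - ∑ i, zb (Sum.inl i) := by linarith
  have huQ : ∀ i, (1/2) * (xb ⬝ᵥ Q i *ᵥ xb) + d i
      = (1/β) * Real.log (zb (Sum.inl i) / (1 - ∑ j, zb (Sum.inl j))) := by
    intro i; rw [hquad]; exact hcrit1 i
  have huB : ∀ i, (1/2) * (xb ⬝ᵥ B i *ᵥ xb) + c i = zb (Sum.inr i) / α i := by
    intro i; rw [hquad]; exact hcrit2 i
  have hexp : ∀ i, Real.exp (β * ((1/2) * (xb ⬝ᵥ Q i *ᵥ xb) + d i))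
      = zb (Sum.inl i) / (1 - ∑ j, zb (Sum.inl j)) := by
    intro i
    rw [huQ i, show β * ((1/β) * Real.log (zb (Sum.inl i) / (1 - ∑ j, zb (Sum.inl j))))
        = Real.log (zb (Sum.inl i) / (1 - ∑ j, zb (Sum.inl j))) by field_simp,
      Real.exp_log (div_pos (hpos i) ht)]
  have hSexp : 1 + (∑ i, Real.exp (β * ((1/2) * (xb ⬝ᵥ Q i *ᵥ xb) + d i)))
      = (1 - ∑ i, zb (Sum.inl i))⁻¹ := by
    rw [Finset.sum_congr rfl (fun i _ => hexp i), ← Finset.sum_div]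
    field_simp
    ring
  constructor
  · -- derivative part
    have h1 := (hasFDerivAt_quad A xb).const_mul (1/2 : ℝ)
    have h2 : HasFDerivAt (fun x : Fin n → ℝ => f ⬝ᵥ x) (dotCLM f) xb :=
      (dotCLM f).hasFDerivAt
    have he : ∀ i : Fin p, HasFDerivAt
        (fun x : Fin n → ℝ => Real.exp (β * ((1/2) * (x ⬝ᵥ Q i *ᵥ x) + d i)))
        (Real.exp (β * ((1/2) * (xb ⬝ᵥ Q i *ᵥ xb) + d i)) •
          (β • ((1/2 : ℝ) • dotCLM ((Q i)ᵀ *ᵥ xb + Q i *ᵥ xb)))) xb := fun i =>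
      ((((hasFDerivAt_quad (Q i) xb).const_mul (1/2 : ℝ)).add_const (d i)).const_mul β).exp
    have hs := HasFDerivAt.fun_sum (fun i (_ : i ∈ Finset.univ) => he i)
    have h4 := hs.const_add 1
    have h5 := h4.log (by positivity)
    have h6 := h5.const_mul (1/β)
    have hg : ∀ i : Fin r, HasFDerivAt
        (fun x : Fin n → ℝ => (1/2) * (x ⬝ᵥ B i *ᵥ x) + c i)
        ((1/2 : ℝ) • dotCLM ((B i)ᵀ *ᵥ xb + B i *ᵥ xb)) xb := fun i =>
      ((hasFDerivAt_quad (B i) xb).const_mul (1/2 : ℝ)).add_const (c i)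
    have hsq : ∀ i : Fin r, HasFDerivAt
        (fun x : Fin n → ℝ => ((1/2) * (x ⬝ᵥ B i *ᵥ x) + c i)^2)
        (((1/2) * (xb ⬝ᵥ B i *ᵥ xb) + c i) • ((1/2 : ℝ) • dotCLM ((B i)ᵀ *ᵥ xb + B i *ᵥ xb))
          + ((1/2) * (xb ⬝ᵥ B i *ᵥ xb) + c i) • ((1/2 : ℝ) • dotCLM ((B i)ᵀ *ᵥ xb + B i *ᵥ xb)))
        xb := fun i => by
      simpa only [pow_two, Pi.mul_def] using (hg i).mul (hg i)
    have h7 : ∀ i : Fin r, HasFDerivAt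
        (fun x : Fin n → ℝ => (α i / 2) * (((1/2) * (x ⬝ᵥ B i *ᵥ x) + c i)^2))
        ((α i / 2) • (((1/2) * (xb ⬝ᵥ B i *ᵥ xb) + c i) • ((1/2 : ℝ) • dotCLM ((B i)ᵀ *ᵥ xb + B i *ᵥ xb))
          + ((1/2) * (xb ⬝ᵥ B i *ᵥ xb) + c i) • ((1/2 : ℝ) • dotCLM ((B i)ᵀ *ᵥ xb + B i *ᵥ xb))))
        xb := fun i => (hsq i).const_mul (α i / 2)
    have h8 := HasFDerivAt.fun_sum (fun i (_ : i ∈ Finset.univ) => h7 i)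
    have hP0 := ((h1.sub h2).add h6).add h8
    rw [hPrim]
    refine Eq.trans (HasFDerivAt.fderiv hP0) ?_
    ext v
    simp only [ContinuousLinearMap.add_apply, ContinuousLinearMap.coe_sub', Pi.sub_apply,
      ContinuousLinearMap.coe_smul', Pi.smul_apply, ContinuousLinearMap.coe_sum',
      Finset.sum_apply, dotCLM_apply, smul_eq_mul, ContinuousLinearMap.zero_apply,
      haA, haQ, haB, add_dotProduct]
    have eQ' : 1 / β *
        ((1 + ∑ i : Fin p, Real.exp (β * (1 / 2 * xb ⬝ᵥ Q i *ᵥ xb + d i)))⁻¹ *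
          ∑ x : Fin p, Real.exp (β * (1 / 2 * xb ⬝ᵥ Q x *ᵥ xb + d x)) *
            (β * (1 / 2 * (Q x *ᵥ xb ⬝ᵥ v + Q x *ᵥ xb ⬝ᵥ v))))
        = ∑ i : Fin p, zb (Sum.inl i) * (Q i *ᵥ xb ⬝ᵥ v) := by
      rw [hSexp, inv_inv, Finset.mul_sum, Finset.mul_sum]
      refine Finset.sum_congr rfl fun i _ => ?_
      rw [hexp i]
      have htne : (1 - ∑ j : Fin p, zb (Sum.inl j)) ≠ 0 := ne_of_gt ht
      field_simp
      ring
    have eB' : ∑ i : Fin r, α i / 2 *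
          ((1 / 2 * xb ⬝ᵥ B i *ᵥ xb + c i) * (1 / 2 * (B i *ᵥ xb ⬝ᵥ v + B i *ᵥ xb ⬝ᵥ v)) +
            (1 / 2 * xb ⬝ᵥ B i *ᵥ xb + c i) * (1 / 2 * (B i *ᵥ xb ⬝ᵥ v + B i *ᵥ xb ⬝ᵥ v)))
        = ∑ i : Fin r, zb (Sum.inr i) * (B i *ᵥ xb ⬝ᵥ v) := by
      refine Finset.sum_congr rfl fun i _ => ?_
      rw [huB i]
      have hane : α i ≠ 0 := ne_of_gt (hα i)
      field_simp
      ring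
    rw [eQ', eB']
    have h0 := congrArg (fun w => w ⬝ᵥ v) hGx
    simp only [hGa, Matrix.add_mulVec, sum_mulVec', Matrix.smul_mulVec,
      add_dotProduct, sum_dotProduct', smul_dotProduct, smul_eq_mul] at h0
    linear_combination h0
  · -- value part
    simp only [hPrim, hDual]
    rw [← hxb, hSexp, Real.log_inv]
    have eP : ∑ i : Fin r, α i / 2 * (1 / 2 * xb ⬝ᵥ B i *ᵥ xb + c i) ^ 2
        = (∑ i : Fin r, zb (Sum.inr i) ^ 2 / α i) / 2 := by
      rw [Finset.sum_div]
      refine Finset.sum_congr rfl fun i _ => ?_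
      rw [huB i]
      have hane : α i ≠ 0 := ne_of_gt (hα i)
      field_simp
    have eD : ∑ i : Fin r, zb (Sum.inr i) ^ 2 / (2 * α i)
        = (∑ i : Fin r, zb (Sum.inr i) ^ 2 / α i) / 2 := by
      rw [Finset.sum_div]
      refine Finset.sum_congr rfl fun i _ => ?_
      rw [div_div, mul_comm]
    have hcm : ∀ M : Matrix (Fin n) (Fin n) ℝ, M *ᵥ xb ⬝ᵥ xb = xb ⬝ᵥ M *ᵥ xb :=
      fun M => dotProduct_comm _ _
    have hfx : f ⬝ᵥ xb = xb ⬝ᵥ A *ᵥ xb + (∑ i, zb (Sum.inl i) * (xb ⬝ᵥ Q i *ᵥ xb))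
        + (∑ i, zb (Sum.inr i) * (xb ⬝ᵥ B i *ᵥ xb)) := by
      have h0 : f ⬝ᵥ xb = (Ga zb *ᵥ xb) ⬝ᵥ xb := by rw [hGx]
      rw [h0]
      simp only [hGa, Matrix.add_mulVec, sum_mulVec', Matrix.smul_mulVec,
        add_dotProduct, sum_dotProduct', smul_dotProduct, smul_eq_mul, hcm]
    have e1 : ∑ i, zb (Sum.inl i) * (xb ⬝ᵥ Q i *ᵥ xb)
        = 2/β * (∑ i, zb (Sum.inl i) * Real.log (zb (Sum.inl i)))
          - 2/β * ((∑ i, zb (Sum.inl i)) * Real.log (1 - ∑ i, zb (Sum.inl i)))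
          - 2 * ∑ i, d i * zb (Sum.inl i) := by
      have hterm : ∀ i, zb (Sum.inl i) * (xb ⬝ᵥ Q i *ᵥ xb)
          = 2/β * (zb (Sum.inl i) * Real.log (zb (Sum.inl i)))
            - 2/β * (zb (Sum.inl i) * Real.log (1 - ∑ j, zb (Sum.inl j)))
            - 2 * (d i * zb (Sum.inl i)) := by
        intro i
        have h := huQ i
        rw [Real.log_div (ne_of_gt (hpos i)) (ne_of_gt ht)] at h
        have hq : xb ⬝ᵥ Q i *ᵥ xb
            = 2 * (1/β * (Real.log (zb (Sum.inl i)) - Real.log (1 - ∑ j, zb (Sum.inl j))) - d i) := by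
          rw [mul_sub] at h ⊢
          linarith [h]
        rw [hq]
        have hbne : β ≠ 0 := ne_of_gt hβ
        field_simp
      rw [Finset.sum_congr rfl fun i _ => hterm i, Finset.sum_sub_distrib,
        Finset.sum_sub_distrib, ← Finset.mul_sum, ← Finset.mul_sum, ← Finset.mul_sum,
        ← Finset.sum_mul]
    have e2 : ∑ i, zb (Sum.inr i) * (xb ⬝ᵥ B i *ᵥ xb)
        = 2 * (∑ i, zb (Sum.inr i) ^ 2 / α i) - 2 * ∑ i, c i * zb (Sum.inr i) := by
      have hterm : ∀ i, zb (Sum.inr i) * (xb ⬝ᵥ B i *ᵥ xb)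
          = 2 * (zb (Sum.inr i) ^ 2 / α i) - 2 * (c i * zb (Sum.inr i)) := by
        intro i
        have h := huB i
        have hq : xb ⬝ᵥ B i *ᵥ xb = 2 * (zb (Sum.inr i) / α i - c i) := by linarith [h]
        rw [hq]
        have hane : α i ≠ 0 := ne_of_gt (hα i)
        field_simp
      rw [Finset.sum_congr rfl fun i _ => hterm i, Finset.sum_sub_distrib,
        ← Finset.mul_sum, ← Finset.mul_sum]
    rw [eP, eD]
    rw [e1, e2] at hfx
    linear_combination -hfx / 2
end

section
/- Min-max duality: If ζ̄ ∈ 𝓢ₐ⁺ is a critical point of Π^d and x̄ = Gₐ(ζ̄)⁻¹f, then x̄ is a global minimizer of Π on ℝⁿ, ζ̄ is a global maximizer of Π^d on 𝓢ₐ⁺, and Π(x̄) = min_{x ∈ ℝⁿ} Π(x) = max_{ζ ∈ 𝓢ₐ⁺} Π^d(ζ) = Π^d(ζ̄). -/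
open Matrix

private lemma dot_sum_mulVec {n : ℕ} {k : Type*} (s : Finset k)
    (M : k → Matrix (Fin n) (Fin n) ℝ) (x y : Fin n → ℝ) :
    x ⬝ᵥ (∑ i ∈ s, M i) *ᵥ y = ∑ i ∈ s, x ⬝ᵥ (M i) *ᵥ y := by
  induction s using Finset.cons_induction with
  | empty => simp
  | cons a s ha ih =>
      rw [Finset.sum_cons, Finset.sum_cons, Matrix.add_mulVec, dotProduct_add, ih]

private lemma symm_dot {n : ℕ} {M : Matrix (Fin n) (Fin n) ℝ} (hM : M.IsSymm)
    (x y : Fin n → ℝ) : x ⬝ᵥ M *ᵥ y = y ⬝ᵥ M *ᵥ x := by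
  have h1 : x ᵥ* M = M *ᵥ x := by rw [← vecMul_transpose]; rw [hM]
  rw [dotProduct_mulVec, h1, dotProduct_comm]

private lemma quad_ineq {n : ℕ} {G : Matrix (Fin n) (Fin n) ℝ} (hG : G.IsSymm)
    (hPD : G.PosDef) {f xbar : Fin n → ℝ} (hx : G *ᵥ xbar = f) (x : Fin n → ℝ) :
    -(1/2) * (f ⬝ᵥ xbar) ≤ (1/2) * (x ⬝ᵥ G *ᵥ x) - f ⬝ᵥ x := by
  have h0 : 0 ≤ (x - xbar) ⬝ᵥ G *ᵥ (x - xbar) := by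
    have := hPD.posSemidef.dotProduct_mulVec_nonneg (x - xbar); simpa using this
  have hexp : (x - xbar) ⬝ᵥ G *ᵥ (x - xbar)
      = x ⬝ᵥ G *ᵥ x - 2 * (f ⬝ᵥ x) + f ⬝ᵥ xbar := by
    rw [Matrix.mulVec_sub, dotProduct_sub, sub_dotProduct, sub_dotProduct, hx]
    have h1 : xbar ⬝ᵥ G *ᵥ x = x ⬝ᵥ G *ᵥ xbar := symm_dot hG xbar x
    rw [h1, hx]
    have h2 : x ⬝ᵥ f = f ⬝ᵥ x := dotProduct_comm x f
    have h3 : xbar ⬝ᵥ f = f ⬝ᵥ xbar := dotProduct_comm xbar f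
    rw [h2, h3]; ring
  rw [hexp] at h0; linarith

private lemma sq_fenchel {a s σ : ℝ} (ha : 0 < a) :
    σ * s - σ^2/(2*a) ≤ a/2 * s^2 := by
  have key : a/2 * s^2 - (σ * s - σ^2/(2*a)) = (a*s - σ)^2 / (2*a) := by
    field_simp; ring
  nlinarith [div_nonneg (sq_nonneg (a*s - σ)) (by linarith : (0:ℝ) ≤ 2*a), key]

private lemma lse_fenchel {p : ℕ} {β : ℝ} (hβ : 0 < β) (τ y : Fin p → ℝ)
    (hpos : ∀ i, 0 < τ i) (hsum : ∑ i, τ i < 1) :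
    ∑ i, τ i * y i - (1/β) * ((∑ i, τ i * Real.log (τ i))
      + (1 - ∑ i, τ i) * Real.log (1 - ∑ i, τ i))
    ≤ (1/β) * Real.log (1 + ∑ i, Real.exp (β * y i)) := by
  set s := 1 - ∑ i, τ i with hs
  have hs0 : 0 < s := by rw [hs]; linarith
  have hZ : (0:ℝ) < 1 + ∑ i, Real.exp (β * y i) := by positivity
  set Z := 1 + ∑ i, Real.exp (β * y i) with hZdef
  have key : ∀ i, τ i * (β * y i) - τ i * Real.log (τ i) - τ i * Real.log Z
      ≤ Real.exp (β * y i) / Z - τ i := by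
    intro i
    have hti := hpos i
    have harg : 0 < Real.exp (β * y i) / (Z * τ i) := by positivity
    have hlog := Real.log_le_sub_one_of_pos harg
    have hexp : Real.log (Real.exp (β * y i) / (Z * τ i))
        = β * y i - Real.log Z - Real.log (τ i) := by
      rw [Real.log_div (Real.exp_ne_zero _) (by positivity),
        Real.log_mul (ne_of_gt hZ) (ne_of_gt hti), Real.log_exp]
      ring
    have h1 := mul_le_mul_of_nonneg_left hlog hti.le
    rw [hexp] at h1
    have heq : τ i * (Real.exp (β * y i) / (Z * τ i) - 1)
        = Real.exp (β * y i) / Z - τ i := by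
      field_simp
    have h2 : τ i * (β * y i - Real.log Z - Real.log (τ i))
        = τ i * (β * y i) - τ i * Real.log (τ i) - τ i * Real.log Z := by ring
    rw [heq, h2] at h1
    exact h1
  have hsumkey : ∑ i, (τ i * (β * y i) - τ i * Real.log (τ i) - τ i * Real.log Z)
      ≤ ∑ i, (Real.exp (β * y i) / Z - τ i) :=
    Finset.sum_le_sum (fun i _ => key i)
  have keys : s * (- Real.log Z) - s * Real.log s ≤ 1 / Z - s := by
    have harg : 0 < 1 / (Z * s) := by positivity
    have hlog := Real.log_le_sub_one_of_pos harg
    have hexp : Real.log (1 / (Z * s)) = - Real.log Z - Real.log s := by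
      rw [Real.log_div one_ne_zero (by positivity),
        Real.log_mul (ne_of_gt hZ) (ne_of_gt hs0), Real.log_one]
      ring
    have h1 := mul_le_mul_of_nonneg_left hlog hs0.le
    rw [hexp] at h1
    have heq : s * (1 / (Z * s) - 1) = 1 / Z - s := by field_simp
    rw [heq] at h1
    linarith [h1]
  have e1 : ∑ i, (τ i * (β * y i) - τ i * Real.log (τ i) - τ i * Real.log Z)
      = β * (∑ i, τ i * y i) - (∑ i, τ i * Real.log (τ i)) - (∑ i, τ i) * Real.log Z := by
    rw [Finset.sum_sub_distrib, Finset.sum_sub_distrib, Finset.sum_mul, Finset.mul_sum]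
    congr 2
    · exact Finset.sum_congr rfl (fun i _ => by ring)
  have e2 : ∑ i, (Real.exp (β * y i) / Z - τ i)
      = (∑ i, Real.exp (β * y i)) / Z - ∑ i, τ i := by
    rw [Finset.sum_sub_distrib, Finset.sum_div]
  have hZsum : (∑ i, Real.exp (β * y i)) / Z + 1 / Z = 1 := by
    rw [← add_div]
    rw [div_eq_one_iff_eq (ne_of_gt hZ)]
    rw [hZdef]; ring
  have hts : (∑ i, τ i) + s = 1 := by rw [hs]; ring
  have hlogsplit : (∑ i, τ i) * Real.log Z + s * Real.log Z = Real.log Z := by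
    linear_combination Real.log Z * hts
  rw [e1] at hsumkey
  rw [e2] at hsumkey
  -- combine
  have hmain : β * (∑ i, τ i * y i) - (∑ i, τ i * Real.log (τ i)) - s * Real.log s
      ≤ Real.log Z := by clear_value s Z; linarith
  rw [← mul_le_mul_iff_right₀ hβ]
  have hβ' : β ≠ 0 := ne_of_gt hβ
  have lhs_eq : β * (∑ i, τ i * y i - 1/β * ((∑ i, τ i * Real.log (τ i)) + s * Real.log s))
      = β * (∑ i, τ i * y i) - (∑ i, τ i * Real.log (τ i)) - s * Real.log s := by
    field_simp; ring
  have rhs_eq : β * (1/β * Real.log Z) = Real.log Z := by field_simp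
  rw [lhs_eq, rhs_eq]
  exact hmain

private lemma lse_eq {p : ℕ} {β : ℝ} (hβ : 0 < β) (τ y : Fin p → ℝ)
    (hpos : ∀ i, 0 < τ i) (hsum : ∑ i, τ i < 1)
    (hy : ∀ i, y i = (1/β) * Real.log (τ i / (1 - ∑ j, τ j))) :
    (1/β) * Real.log (1 + ∑ i, Real.exp (β * y i))
    = ∑ i, τ i * y i - (1/β) * ((∑ i, τ i * Real.log (τ i))
      + (1 - ∑ i, τ i) * Real.log (1 - ∑ i, τ i)) := by
  set s := 1 - ∑ i, τ i with hs
  have hs0 : 0 < s := by rw [hs]; linarith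
  have hβ' : β ≠ 0 := ne_of_gt hβ
  have hexp : ∀ i, Real.exp (β * y i) = τ i / s := by
    intro i
    have h1 : β * y i = Real.log (τ i / s) := by
      rw [hy i]; field_simp
    rw [h1, Real.exp_log (div_pos (hpos i) hs0)]
  have hsum2 : ∑ i, Real.exp (β * y i) = (∑ i, τ i) / s := by
    rw [Finset.sum_div]
    exact Finset.sum_congr rfl (fun i _ => hexp i)
  have h1 : 1 + (∑ i, τ i) / s = 1 / s := by
    field_simp
    rw [hs]; ring
  have hlog1 : Real.log (1 + ∑ i, Real.exp (β * y i)) = - Real.log s := by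
    rw [hsum2, h1, one_div, Real.log_inv]
  have hterm : ∀ i, τ i * y i = (1/β) * (τ i * Real.log (τ i)) - (1/β) * (τ i * Real.log s) := by
    intro i
    rw [hy i, Real.log_div (ne_of_gt (hpos i)) (ne_of_gt hs0)]
    ring
  have hsum3 : ∑ i, τ i * y i
      = (1/β) * (∑ i, τ i * Real.log (τ i)) - (1/β) * ((∑ i, τ i) * Real.log s) := by
    rw [Finset.sum_congr rfl (fun i _ => hterm i), Finset.sum_sub_distrib,
      ← Finset.mul_sum, ← Finset.mul_sum, Finset.sum_mul]
  have hts : (∑ i, τ i) + s = 1 := by rw [hs]; ring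
  rw [hlog1, hsum3]
  have : (∑ i, τ i) * Real.log s + s * Real.log s = Real.log s := by
    linear_combination Real.log s * hts
  field_simp
  linear_combination (Real.log s) * hts

theorem min_max_duality
    {n p r : ℕ} (hn : 0 < n) (hp : 0 < p) (hr : 0 < r)
    (A : Matrix (Fin n) (Fin n) ℝ) (hA : A.IsSymm)
    (Q : Fin p → Matrix (Fin n) (Fin n) ℝ) (hQ : ∀ i, (Q i).IsSymm)
    (B : Fin r → Matrix (Fin n) (Fin n) ℝ) (hB : ∀ i, (B i).IsSymm)
    (f : Fin n → ℝ) (d : Fin p → ℝ) (c : Fin r → ℝ)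
    (β : ℝ) (hβ : 0 < β) (α : Fin r → ℝ) (hα : ∀ i, 0 < α i)
    (Prim : (Fin n → ℝ) → ℝ)
    (hPrim : Prim = fun x => (1/2) * (x ⬝ᵥ A.mulVec x) - f ⬝ᵥ x
        + (1/β) * Real.log (1 + ∑ i, Real.exp (β * ((1/2) * (x ⬝ᵥ (Q i).mulVec x) + d i)))
        + ∑ i, (α i / 2) * ((1/2) * (x ⬝ᵥ (B i).mulVec x) + c i)^2)
    (Ga : ((Fin p ⊕ Fin r) → ℝ) → Matrix (Fin n) (Fin n) ℝ)
    (hGa : Ga = fun ζ => A + ∑ i, ζ (Sum.inl i) • Q i + ∑ i, ζ (Sum.inr i) • B i)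
    (Dual : ((Fin p ⊕ Fin r) → ℝ) → ℝ)
    (hDual : Dual = fun ζ => -(1/2) * (f ⬝ᵥ (Ga ζ)⁻¹.mulVec f)
        - ((1/β) * ((∑ i, ζ (Sum.inl i) * Real.log (ζ (Sum.inl i)))
            + (1 - ∑ i, ζ (Sum.inl i)) * Real.log (1 - ∑ i, ζ (Sum.inl i)))
          - ∑ i, d i * ζ (Sum.inl i))
        - (∑ i, (ζ (Sum.inr i))^2 / (2 * α i) - ∑ i, c i * ζ (Sum.inr i)))
    (zb : (Fin p ⊕ Fin r) → ℝ)
    (hpos : ∀ i, 0 < zb (Sum.inl i)) (hsum : ∑ i, zb (Sum.inl i) < 1)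
    (hdet : (Ga zb).det ≠ 0)
    (hcrit1 : ∀ i, (1/2) * (f ⬝ᵥ ((Ga zb)⁻¹ * Q i * (Ga zb)⁻¹).mulVec f) + d i
        = (1/β) * Real.log (zb (Sum.inl i) / (1 - ∑ j, zb (Sum.inl j))))
    (hcrit2 : ∀ i, (1/2) * (f ⬝ᵥ ((Ga zb)⁻¹ * B i * (Ga zb)⁻¹).mulVec f) + c i
        = zb (Sum.inr i) / α i)
    (xb : Fin n → ℝ) (hxb : xb = (Ga zb)⁻¹.mulVec f)
    (hposdef : (Ga zb).PosDef) :
    (∀ x : Fin n → ℝ, Prim xb ≤ Prim x) ∧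
    (∀ ζ : (Fin p ⊕ Fin r) → ℝ, (∀ i, 0 < ζ (Sum.inl i)) → (∑ i, ζ (Sum.inl i)) < 1 →
      (Ga ζ).PosDef → Dual ζ ≤ Dual zb) ∧
    Prim xb = Dual zb := by
  have hA' : Aᵀ = A := hA
  have hQ' : ∀ i, (Q i)ᵀ = Q i := hQ
  have hB' : ∀ i, (B i)ᵀ = B i := hB
  have hGsym : ∀ ζ : (Fin p ⊕ Fin r) → ℝ, (Ga ζ).IsSymm := by
    intro ζ
    rw [hGa]
    show _ᵀ = _
    simp only [Matrix.transpose_add, Matrix.transpose_sum, Matrix.transpose_smul, hA', hQ', hB']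
  have hdetu : IsUnit (Ga zb).det := isUnit_iff_ne_zero.mpr hdet
  have hGxb : (Ga zb) *ᵥ xb = f := by
    rw [hxb, Matrix.mulVec_mulVec, Matrix.mul_nonsing_inv _ hdetu, Matrix.one_mulVec]
  have hGinvsym : ((Ga zb)⁻¹).IsSymm := by
    show ((Ga zb)⁻¹)ᵀ = (Ga zb)⁻¹
    rw [Matrix.transpose_nonsing_inv, (hGsym zb)]
  -- translate criticality into statements about xb
  have hgen : ∀ M : Matrix (Fin n) (Fin n) ℝ,
      f ⬝ᵥ ((Ga zb)⁻¹ * M * (Ga zb)⁻¹) *ᵥ f = xb ⬝ᵥ M *ᵥ xb := by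
    intro M
    rw [← Matrix.mulVec_mulVec, ← Matrix.mulVec_mulVec, ← hxb,
      symm_dot hGinvsym f (M *ᵥ xb), ← hxb, dotProduct_comm]
  have hc1 : ∀ i, (1/2) * (xb ⬝ᵥ (Q i) *ᵥ xb) + d i
      = (1/β) * Real.log (zb (Sum.inl i) / (1 - ∑ j, zb (Sum.inl j))) := by
    intro i; rw [← hgen (Q i)]; exact hcrit1 i
  have hc2 : ∀ i, (1/2) * (xb ⬝ᵥ (B i) *ᵥ xb) + c i = zb (Sum.inr i) / α i := by
    intro i; rw [← hgen (B i)]; exact hcrit2 i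
  -- quadratic form expansion
  have hquadexp : ∀ (ζ : (Fin p ⊕ Fin r) → ℝ) (x : Fin n → ℝ), x ⬝ᵥ (Ga ζ) *ᵥ x
      = x ⬝ᵥ A *ᵥ x + (∑ i, ζ (Sum.inl i) * (x ⬝ᵥ (Q i) *ᵥ x))
        + (∑ i, ζ (Sum.inr i) * (x ⬝ᵥ (B i) *ᵥ x)) := by
    intro ζ x
    rw [hGa]
    simp only [Matrix.add_mulVec, dotProduct_add, dot_sum_mulVec, Matrix.smul_mulVec,
      dotProduct_smul, smul_eq_mul]
  -- weak duality part 1 : Lagrangian ≤ Prim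
  have hXile : ∀ (ζ : (Fin p ⊕ Fin r) → ℝ), (∀ i, 0 < ζ (Sum.inl i)) →
      (∑ i, ζ (Sum.inl i)) < 1 → ∀ x : Fin n → ℝ,
      (1/2) * (x ⬝ᵥ (Ga ζ) *ᵥ x) - f ⬝ᵥ x
        - ((1/β) * ((∑ i, ζ (Sum.inl i) * Real.log (ζ (Sum.inl i)))
            + (1 - ∑ i, ζ (Sum.inl i)) * Real.log (1 - ∑ i, ζ (Sum.inl i)))
          - ∑ i, d i * ζ (Sum.inl i))
        - (∑ i, (ζ (Sum.inr i))^2 / (2 * α i) - ∑ i, c i * ζ (Sum.inr i))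
      ≤ Prim x := by
    intro ζ hp1 hp2 x
    rw [hPrim]
    simp only
    rw [hquadexp ζ x]
    have hlse := lse_fenchel hβ (fun i => ζ (Sum.inl i))
      (fun i => (1/2) * (x ⬝ᵥ (Q i) *ᵥ x) + d i) hp1 hp2
    have hsq : ∑ i, (ζ (Sum.inr i) * ((1/2) * (x ⬝ᵥ (B i) *ᵥ x) + c i)
          - (ζ (Sum.inr i))^2/(2 * α i))
        ≤ ∑ i, (α i / 2) * ((1/2) * (x ⬝ᵥ (B i) *ᵥ x) + c i)^2 := by
      apply Finset.sum_le_sum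
      intro i _
      have h := sq_fenchel (a := α i) (s := (1/2) * (x ⬝ᵥ (B i) *ᵥ x) + c i)
        (σ := ζ (Sum.inr i)) (hα i)
      linarith [h]
    have e1 : ∑ i, ζ (Sum.inl i) * ((1/2) * (x ⬝ᵥ (Q i) *ᵥ x) + d i)
        = (1/2) * ∑ i, ζ (Sum.inl i) * (x ⬝ᵥ (Q i) *ᵥ x) + ∑ i, d i * ζ (Sum.inl i) := by
      rw [Finset.mul_sum, ← Finset.sum_add_distrib]
      exact Finset.sum_congr rfl (fun i _ => by ring)
    have e2 : ∑ i, (ζ (Sum.inr i) * ((1/2) * (x ⬝ᵥ (B i) *ᵥ x) + c i)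
          - (ζ (Sum.inr i))^2/(2 * α i))
        = (1/2) * ∑ i, ζ (Sum.inr i) * (x ⬝ᵥ (B i) *ᵥ x) + ∑ i, c i * ζ (Sum.inr i)
          - ∑ i, (ζ (Sum.inr i))^2/(2 * α i) := by
      rw [Finset.mul_sum, ← Finset.sum_add_distrib, ← Finset.sum_sub_distrib]
      exact Finset.sum_congr rfl (fun i _ => by ring)
    rw [e1] at hlse
    rw [e2] at hsq
    linarith [hlse, hsq]
  -- weak duality part 2 : Dual ≤ Lagrangian
  have hDle : ∀ (ζ : (Fin p ⊕ Fin r) → ℝ), (Ga ζ).PosDef → ∀ x : Fin n → ℝ,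
      Dual ζ ≤ (1/2) * (x ⬝ᵥ (Ga ζ) *ᵥ x) - f ⬝ᵥ x
        - ((1/β) * ((∑ i, ζ (Sum.inl i) * Real.log (ζ (Sum.inl i)))
            + (1 - ∑ i, ζ (Sum.inl i)) * Real.log (1 - ∑ i, ζ (Sum.inl i)))
          - ∑ i, d i * ζ (Sum.inl i))
        - (∑ i, (ζ (Sum.inr i))^2 / (2 * α i) - ∑ i, c i * ζ (Sum.inr i)) := by
    intro ζ hPD x
    rw [hDual]
    simp only
    have hdet2 : IsUnit (Ga ζ).det := isUnit_iff_ne_zero.mpr (ne_of_gt hPD.det_pos)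
    have hinv : (Ga ζ) *ᵥ ((Ga ζ)⁻¹ *ᵥ f) = f := by
      rw [Matrix.mulVec_mulVec, Matrix.mul_nonsing_inv _ hdet2, Matrix.one_mulVec]
    have h := quad_ineq (hGsym ζ) hPD hinv x
    linarith [h]
  -- equality at the critical point
  have heq : Prim xb = Dual zb := by
    rw [hPrim, hDual]
    simp only
    have hlseeq := lse_eq hβ (fun i => zb (Sum.inl i))
      (fun i => (1/2) * (xb ⬝ᵥ (Q i) *ᵥ xb) + d i) hpos hsum (fun i => hc1 i)
    have e1 : ∑ i, zb (Sum.inl i) * ((1/2) * (xb ⬝ᵥ (Q i) *ᵥ xb) + d i)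
        = (1/2) * ∑ i, zb (Sum.inl i) * (xb ⬝ᵥ (Q i) *ᵥ xb) + ∑ i, d i * zb (Sum.inl i) := by
      rw [Finset.mul_sum, ← Finset.sum_add_distrib]
      exact Finset.sum_congr rfl (fun i _ => by ring)
    rw [e1] at hlseeq
    have hsqeq : ∑ i, (α i / 2) * ((1/2) * (xb ⬝ᵥ (B i) *ᵥ xb) + c i)^2
        = (1/2) * ∑ i, zb (Sum.inr i) * (xb ⬝ᵥ (B i) *ᵥ xb) + ∑ i, c i * zb (Sum.inr i)
          - ∑ i, (zb (Sum.inr i))^2/(2 * α i) := by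
      rw [Finset.mul_sum, ← Finset.sum_add_distrib, ← Finset.sum_sub_distrib]
      apply Finset.sum_congr rfl
      intro i _
      have h := hc2 i
      have hai := hα i
      have hz : zb (Sum.inr i) = α i * ((1/2) * (xb ⬝ᵥ (B i) *ᵥ xb) + c i) := by
        field_simp at h
        linarith [h]
      rw [hz]
      field_simp
      ring
    have hfxb : f ⬝ᵥ (Ga zb)⁻¹ *ᵥ f = f ⬝ᵥ xb := by rw [← hxb]
    have hxGx : xb ⬝ᵥ A *ᵥ xb + (∑ i, zb (Sum.inl i) * (xb ⬝ᵥ (Q i) *ᵥ xb))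
        + (∑ i, zb (Sum.inr i) * (xb ⬝ᵥ (B i) *ᵥ xb)) = f ⬝ᵥ xb := by
      rw [← hquadexp zb xb, hGxb, dotProduct_comm]
    rw [hfxb]
    linarith [hlseeq, hsqeq, hxGx]
  refine ⟨?_, ?_, heq⟩
  · intro x
    have h1 := hDle zb hposdef x
    have h2 := hXile zb hpos hsum x
    linarith [h1, h2, heq]
  · intro ζ h1 h2 h3
    have h4 := hDle ζ h3 xb
    have h5 := hXile ζ h1 h2 xb
    linarith [h4, h5, heq]
end

section
/- Double-max duality (dual to primal direction): If ζ̄ ∈ 𝓢ₐ⁻ is a critical point of Π^d and is a local maximizer of Π^d on 𝓢ₐ⁻, then x̄ = Gₐ(ζ̄)⁻¹f is a local maximizer of Π on ℝⁿ, and Π(x̄) = Π^d(ζ̄). -/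
open Matrix

lemma negdef_det_ne_zero {n : ℕ} {G : Matrix (Fin n) (Fin n) ℝ}
    (hneg : ∀ v : Fin n → ℝ, v ≠ 0 → v ⬝ᵥ G.mulVec v < 0) : G.det ≠ 0 := by
  intro h
  obtain ⟨v, hv, hv0⟩ := (Matrix.exists_mulVec_eq_zero_iff).2 h
  have := hneg v hv
  rw [hv0] at this
  simp at this

lemma symm_dot_swap {n : ℕ} {G : Matrix (Fin n) (Fin n) ℝ} (hG : G.IsSymm)
    (u v : Fin n → ℝ) : u ⬝ᵥ G.mulVec v = v ⬝ᵥ G.mulVec u := by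
  rw [Matrix.dotProduct_mulVec, ← Matrix.mulVec_transpose, hG.eq, dotProduct_comm]

lemma quad_max {n : ℕ} {G : Matrix (Fin n) (Fin n) ℝ} (hG : G.IsSymm)
    (hneg : ∀ v : Fin n → ℝ, v ≠ 0 → v ⬝ᵥ G.mulVec v < 0) (f x : Fin n → ℝ) :
    (1/2) * (x ⬝ᵥ G.mulVec x) - f ⬝ᵥ x ≤ -(1/2) * (f ⬝ᵥ G⁻¹.mulVec f) := by
  have hdet : G.det ≠ 0 := negdef_det_ne_zero hneg
  set y := G⁻¹.mulVec f with hy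
  have hGy : G.mulVec y = f := by
    rw [hy, Matrix.mulVec_mulVec, Matrix.mul_nonsing_inv _ (isUnit_iff_ne_zero.2 hdet),
      Matrix.one_mulVec]
  have h1 : f ⬝ᵥ y = y ⬝ᵥ G.mulVec y := by rw [hGy]; exact dotProduct_comm _ _
  have h2 : f ⬝ᵥ x = y ⬝ᵥ G.mulVec x := by
    rw [← hGy, symm_dot_swap hG, dotProduct_comm]
  have h3 : x ⬝ᵥ G.mulVec y = y ⬝ᵥ G.mulVec x := symm_dot_swap hG x y
  have key : (x - y) ⬝ᵥ G.mulVec (x - y) ≤ 0 := by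
    rcases eq_or_ne x y with h | h
    · simp [h]
    · exact le_of_lt (hneg _ (sub_ne_zero.2 h))
  have expand : (x - y) ⬝ᵥ G.mulVec (x - y)
      = x ⬝ᵥ G.mulVec x - x ⬝ᵥ G.mulVec y - y ⬝ᵥ G.mulVec x + y ⬝ᵥ G.mulVec y := by
    rw [Matrix.mulVec_sub, dotProduct_sub, sub_dotProduct, sub_dotProduct]
    ring
  have hfy : f ⬝ᵥ G⁻¹.mulVec f = f ⬝ᵥ y := rfl
  rw [hfy]
  nlinarith [key, expand, h1, h2, h3]

lemma negdef_eventually {n : ℕ} {X : Type*} [TopologicalSpace X]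
    {M : X → Matrix (Fin n) (Fin n) ℝ} (hM : Continuous M) (x0 : X)
    (hneg : ∀ v : Fin n → ℝ, v ≠ 0 → v ⬝ᵥ (M x0).mulVec v < 0) :
    ∀ᶠ x in nhds x0, ∀ v : Fin n → ℝ, v ≠ 0 → v ⬝ᵥ (M x).mulVec v < 0 := by
  have hent : ∀ i j, Continuous fun x => M x i j :=
    fun i j => (continuous_apply j).comp ((continuous_apply i).comp hM)
  have hF : Continuous (fun q : X × (Fin n → ℝ) => q.2 ⬝ᵥ (M q.1).mulVec q.2) := by
    simp only [dotProduct, Matrix.mulVec]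
    apply continuous_finset_sum
    intro i _
    apply Continuous.mul
    · exact (continuous_apply i).comp continuous_snd
    · apply continuous_finset_sum
      intro j _
      exact ((hent i j).comp continuous_fst).mul ((continuous_apply j).comp continuous_snd)
  have hopen : IsOpen {q : X × (Fin n → ℝ) | q.2 ⬝ᵥ (M q.1).mulVec q.2 < 0} :=
    isOpen_lt hF continuous_const
  have hsub : ({x0} : Set X) ×ˢ (Metric.sphere (0 : Fin n → ℝ) 1)
      ⊆ {q : X × (Fin n → ℝ) | q.2 ⬝ᵥ (M q.1).mulVec q.2 < 0} := by
    rintro ⟨x, v⟩ ⟨hx, hv⟩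
    simp only [Set.mem_singleton_iff] at hx
    subst hx
    have hv0 : v ≠ 0 := by
      intro h; rw [mem_sphere_zero_iff_norm, h] at hv; simp at hv
    exact hneg v hv0
  obtain ⟨U, V, hU, hV, hxU, hKV, hUV⟩ := generalized_tube_lemma isCompact_singleton
    (isCompact_sphere (0 : Fin n → ℝ) 1) hopen hsub
  filter_upwards [hU.mem_nhds (hxU rfl)] with x hx v hv0
  have hn : (0:ℝ) < ‖v‖ := norm_pos_iff.2 hv0
  set w := ‖v‖⁻¹ • v with hw
  have hwv : v = ‖v‖ • w := by
    rw [hw, smul_smul, mul_inv_cancel₀ hn.ne', one_smul]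
  have hws : w ∈ Metric.sphere (0 : Fin n → ℝ) 1 := by
    rw [mem_sphere_zero_iff_norm, hw, norm_smul]
    simp [abs_of_pos (inv_pos.2 hn), inv_mul_cancel₀ hn.ne']
  have hwneg : w ⬝ᵥ (M x).mulVec w < 0 := hUV (Set.mk_mem_prod hx (hKV hws))
  have : v ⬝ᵥ (M x).mulVec v = ‖v‖^2 * (w ⬝ᵥ (M x).mulVec w) := by
    conv_lhs => rw [hwv]
    rw [smul_dotProduct, Matrix.mulVec_smul, dotProduct_smul, smul_eq_mul, smul_eq_mul]
    ring
  rw [this]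
  exact mul_neg_of_pos_of_neg (by positivity) hwneg

lemma dot_sum_smul_mulVec {n k : ℕ} (x : Fin n → ℝ) (c : Fin k → ℝ)
    (M : Fin k → Matrix (Fin n) (Fin n) ℝ) :
    x ⬝ᵥ (∑ i, c i • M i).mulVec x = ∑ i, c i * (x ⬝ᵥ (M i).mulVec x) := by
  have h : (∑ i, c i • M i).mulVec x = ∑ i, c i • ((M i).mulVec x) := by
    rw [show (∑ i, c i • M i).mulVec x = mulVec.addMonoidHomLeft x (∑ i, c i • M i) from rfl,
      map_sum]
    simp [mulVec.addMonoidHomLeft, Matrix.smul_mulVec]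
  rw [h, dotProduct]
  simp only [Finset.sum_apply, Pi.smul_apply, smul_eq_mul, Finset.mul_sum]
  rw [Finset.sum_comm]
  apply Finset.sum_congr rfl; intro i _
  rw [dotProduct, Finset.mul_sum]
  apply Finset.sum_congr rfl; intro j _
  rw [Matrix.mulVec, dotProduct]
  ring

lemma logsumexp_eq {p : ℕ} {β : ℝ} (hβ : 0 < β) (e : Fin p → ℝ) {S : ℝ}
    (hS : S = 1 + ∑ i, Real.exp (β * e i)) :
    (1/β) * Real.log S
    = (∑ i, Real.exp (β * e i) / S * e i)
      - ((1/β) * ((∑ i, Real.exp (β * e i) / S * Real.log (Real.exp (β * e i) / S))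
        + (1 - ∑ i, Real.exp (β * e i) / S)
          * Real.log (1 - ∑ i, Real.exp (β * e i) / S))) := by
  have hS0 : 0 < S := by
    rw [hS]; positivity
  have hsum_div : ∑ i, Real.exp (β * e i) / S = 1 - 1/S := by
    rw [← Finset.sum_div, eq_sub_iff_add_eq, ← add_div, div_eq_one_iff_eq hS0.ne', hS]
    ring
  have hlog : ∀ i, Real.log (Real.exp (β * e i) / S) = β * e i - Real.log S := fun i => by
    rw [Real.log_div (Real.exp_ne_zero _) hS0.ne', Real.log_exp]
  have h2 : ∑ i, Real.exp (β * e i) / S * Real.log (Real.exp (β * e i) / S)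
      = β * (∑ i, Real.exp (β * e i) / S * e i) - (1 - 1/S) * Real.log S := by
    rw [← hsum_div, Finset.mul_sum, Finset.sum_mul, ← Finset.sum_sub_distrib]
    apply Finset.sum_congr rfl; intro i _
    rw [hlog i]; ring
  have h3 : (1 - ∑ i, Real.exp (β * e i) / S) * Real.log (1 - ∑ i, Real.exp (β * e i) / S)
      = -(1/S) * Real.log S := by
    rw [hsum_div, sub_sub_cancel, one_div, Real.log_inv]; ring
  rw [h2, h3]
  field_simp
  ring

lemma conj_dot {n : ℕ} {G : Matrix (Fin n) (Fin n) ℝ} (hG : G.IsSymm)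
    (M : Matrix (Fin n) (Fin n) ℝ) (f : Fin n → ℝ) :
    f ⬝ᵥ (G⁻¹ * M * G⁻¹).mulVec f = (G⁻¹.mulVec f) ⬝ᵥ M.mulVec (G⁻¹.mulVec f) := by
  have hsymm : (G⁻¹)ᵀ = G⁻¹ := by rw [Matrix.transpose_nonsing_inv, hG.eq]
  rw [← Matrix.mulVec_mulVec, ← Matrix.mulVec_mulVec, Matrix.dotProduct_mulVec,
    ← Matrix.mulVec_transpose, hsymm]

theorem double_max_duality_dual_to_primal
    {n p r : ℕ} (hn : 0 < n) (hp : 0 < p) (hr : 0 < r)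
    (A : Matrix (Fin n) (Fin n) ℝ) (hA : A.IsSymm)
    (Q : Fin p → Matrix (Fin n) (Fin n) ℝ) (hQ : ∀ i, (Q i).IsSymm)
    (B : Fin r → Matrix (Fin n) (Fin n) ℝ) (hB : ∀ i, (B i).IsSymm)
    (f : Fin n → ℝ) (d : Fin p → ℝ) (c : Fin r → ℝ)
    (β : ℝ) (hβ : 0 < β) (α : Fin r → ℝ) (hα : ∀ i, 0 < α i)
    (Prim : (Fin n → ℝ) → ℝ)
    (hPrim : Prim = fun x => (1/2) * (x ⬝ᵥ A.mulVec x) - f ⬝ᵥ x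
        + (1/β) * Real.log (1 + ∑ i, Real.exp (β * ((1/2) * (x ⬝ᵥ (Q i).mulVec x) + d i)))
        + ∑ i, (α i / 2) * ((1/2) * (x ⬝ᵥ (B i).mulVec x) + c i)^2)
    (Ga : ((Fin p ⊕ Fin r) → ℝ) → Matrix (Fin n) (Fin n) ℝ)
    (hGa : Ga = fun ζ => A + ∑ i, ζ (Sum.inl i) • Q i + ∑ i, ζ (Sum.inr i) • B i)
    (Dual : ((Fin p ⊕ Fin r) → ℝ) → ℝ)
    (hDual : Dual = fun ζ => -(1/2) * (f ⬝ᵥ (Ga ζ)⁻¹.mulVec f)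
        - ((1/β) * ((∑ i, ζ (Sum.inl i) * Real.log (ζ (Sum.inl i)))
            + (1 - ∑ i, ζ (Sum.inl i)) * Real.log (1 - ∑ i, ζ (Sum.inl i)))
          - ∑ i, d i * ζ (Sum.inl i))
        - (∑ i, (ζ (Sum.inr i))^2 / (2 * α i) - ∑ i, c i * ζ (Sum.inr i)))
    (zb : (Fin p ⊕ Fin r) → ℝ)
    (hpos : ∀ i, 0 < zb (Sum.inl i)) (hsum : ∑ i, zb (Sum.inl i) < 1)
    (hdet : (Ga zb).det ≠ 0)
    (hcrit1 : ∀ i, (1/2) * (f ⬝ᵥ ((Ga zb)⁻¹ * Q i * (Ga zb)⁻¹).mulVec f) + d i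
        = (1/β) * Real.log (zb (Sum.inl i) / (1 - ∑ j, zb (Sum.inl j))))
    (hcrit2 : ∀ i, (1/2) * (f ⬝ᵥ ((Ga zb)⁻¹ * B i * (Ga zb)⁻¹).mulVec f) + c i
        = zb (Sum.inr i) / α i)
    (xb : Fin n → ℝ) (hxb : xb = (Ga zb)⁻¹.mulVec f)
    (hnegdef : ∀ x : Fin n → ℝ, x ≠ 0 → x ⬝ᵥ (Ga zb).mulVec x < 0)
    (hmax : IsLocalMaxOn Dual
      {ζ : (Fin p ⊕ Fin r) → ℝ | (∀ i, 0 < ζ (Sum.inl i)) ∧ (∑ i, ζ (Sum.inl i)) < 1 ∧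
        (Ga ζ).det ≠ 0 ∧ ∀ x : Fin n → ℝ, x ≠ 0 → x ⬝ᵥ (Ga ζ).mulVec x < 0} zb) :
    IsLocalMax Prim xb ∧ Prim xb = Dual zb := by
  classical
  -- the dual-to-primal map
  set z : (Fin n → ℝ) → (Fin p ⊕ Fin r) → ℝ := fun x => Sum.elim
      (fun i => Real.exp (β * ((1/2) * (x ⬝ᵥ (Q i).mulVec x) + d i))
        / (1 + ∑ j, Real.exp (β * ((1/2) * (x ⬝ᵥ (Q j).mulVec x) + d j))))
      (fun i => α i * ((1/2) * (x ⬝ᵥ (B i).mulVec x) + c i)) with hzdef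
  -- the total complementary function
  set Xi : (Fin n → ℝ) → ((Fin p ⊕ Fin r) → ℝ) → ℝ := fun x ζ =>
      (1/2) * (x ⬝ᵥ (Ga ζ).mulVec x) - f ⬝ᵥ x
      - ((1/β) * ((∑ i, ζ (Sum.inl i) * Real.log (ζ (Sum.inl i)))
          + (1 - ∑ i, ζ (Sum.inl i)) * Real.log (1 - ∑ i, ζ (Sum.inl i)))
        - ∑ i, d i * ζ (Sum.inl i))
      - (∑ i, (ζ (Sum.inr i))^2 / (2 * α i) - ∑ i, c i * ζ (Sum.inr i)) with hXidef
  have hS0 : ∀ x : Fin n → ℝ,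
      0 < 1 + ∑ j, Real.exp (β * ((1/2) * (x ⬝ᵥ (Q j).mulVec x) + d j)) := by
    intro x; positivity
  -- symmetry of Ga
  have hGsymm : ∀ ζ, (Ga ζ).IsSymm := by
    intro ζ
    rw [hGa]
    show _ᵀ = _
    simp only [Matrix.transpose_add, Matrix.transpose_sum, Matrix.transpose_smul,
      hA.eq, (hQ _).eq, (hB _).eq]
  -- quadratic form expansion
  have hquad : ∀ (ζ : (Fin p ⊕ Fin r) → ℝ) (x : Fin n → ℝ),
      x ⬝ᵥ (Ga ζ).mulVec x = x ⬝ᵥ A.mulVec x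
        + ∑ i, ζ (Sum.inl i) * (x ⬝ᵥ (Q i).mulVec x)
        + ∑ i, ζ (Sum.inr i) * (x ⬝ᵥ (B i).mulVec x) := by
    intro ζ x
    rw [hGa]
    simp only [Matrix.add_mulVec, dotProduct_add, dot_sum_smul_mulVec]
  -- Π(x) = Ξ(x, z x)
  have hPrimXi : ∀ x, Prim x = Xi x (z x) := by
    intro x
    have e1 := logsumexp_eq hβ (fun i => (1/2) * (x ⬝ᵥ (Q i).mulVec x) + d i)
      (S := 1 + ∑ j, Real.exp (β * ((1/2) * (x ⬝ᵥ (Q j).mulVec x) + d j))) rfl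
    rw [hPrim, hXidef]
    dsimp only
    rw [hquad (z x) x]
    simp only [hzdef, Sum.elim_inl, Sum.elim_inr]
    have g2 : ∑ i, Real.exp (β * ((1/2) * (x ⬝ᵥ (Q i).mulVec x) + d i))
          / (1 + ∑ j, Real.exp (β * ((1/2) * (x ⬝ᵥ (Q j).mulVec x) + d j)))
          * (x ⬝ᵥ (Q i).mulVec x)
        = 2 * (∑ i, Real.exp (β * ((1/2) * (x ⬝ᵥ (Q i).mulVec x) + d i))
            / (1 + ∑ j, Real.exp (β * ((1/2) * (x ⬝ᵥ (Q j).mulVec x) + d j)))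
            * ((1/2) * (x ⬝ᵥ (Q i).mulVec x) + d i))
          - 2 * (∑ i, d i * (Real.exp (β * ((1/2) * (x ⬝ᵥ (Q i).mulVec x) + d i))
            / (1 + ∑ j, Real.exp (β * ((1/2) * (x ⬝ᵥ (Q j).mulVec x) + d j))))) := by
      rw [Finset.mul_sum, Finset.mul_sum, ← Finset.sum_sub_distrib]
      apply Finset.sum_congr rfl; intro i _; ring
    have g3 : ∑ i, (α i * ((1/2) * (x ⬝ᵥ (B i).mulVec x) + c i)) * (x ⬝ᵥ (B i).mulVec x)
        = 2 * (∑ i, (α i * ((1/2) * (x ⬝ᵥ (B i).mulVec x) + c i))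
            * ((1/2) * (x ⬝ᵥ (B i).mulVec x) + c i))
          - 2 * (∑ i, c i * (α i * ((1/2) * (x ⬝ᵥ (B i).mulVec x) + c i))) := by
      rw [Finset.mul_sum, Finset.mul_sum, ← Finset.sum_sub_distrib]
      apply Finset.sum_congr rfl; intro i _; ring
    have g4 : ∑ i, (α i * ((1/2) * (x ⬝ᵥ (B i).mulVec x) + c i))^2 / (2 * α i)
        = ∑ i, (α i / 2) * ((1/2) * (x ⬝ᵥ (B i).mulVec x) + c i)^2 := by
      apply Finset.sum_congr rfl; intro i _
      have h := (hα i).ne'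
      field_simp
    have g5 : ∑ i, (α i * ((1/2) * (x ⬝ᵥ (B i).mulVec x) + c i))
          * ((1/2) * (x ⬝ᵥ (B i).mulVec x) + c i)
        = 2 * ∑ i, (α i / 2) * ((1/2) * (x ⬝ᵥ (B i).mulVec x) + c i)^2 := by
      rw [Finset.mul_sum]
      apply Finset.sum_congr rfl; intro i _; ring
    linarith [e1, g2, g3, g4, g5]
  -- Dual(ζ) is the value of Ξ at the critical x, and Ξ(·,ζ) ≤ Dual(ζ) for negdef ζ
  have hXile : ∀ ζ, (∀ v : Fin n → ℝ, v ≠ 0 → v ⬝ᵥ (Ga ζ).mulVec v < 0) →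
      ∀ x, Xi x ζ ≤ Dual ζ := by
    intro ζ hneg x
    have h := quad_max (hGsymm ζ) hneg f x
    rw [hDual, hXidef]
    dsimp only
    linarith
  -- Dual zb = Xi xb zb
  have hGy : (Ga zb).mulVec xb = f := by
    rw [hxb, Matrix.mulVec_mulVec, Matrix.mul_nonsing_inv _ (isUnit_iff_ne_zero.2 hdet),
      Matrix.one_mulVec]
  have hDualXi : Dual zb = Xi xb zb := by
    rw [hDual, hXidef]
    dsimp only
    have h1 : xb ⬝ᵥ (Ga zb).mulVec xb = f ⬝ᵥ (Ga zb)⁻¹.mulVec f := by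
      rw [hGy, hxb, dotProduct_comm]
    have h2 : f ⬝ᵥ xb = f ⬝ᵥ (Ga zb)⁻¹.mulVec f := by rw [hxb]
    rw [h1, h2]; ring
  -- z xb = zb
  have hzxb : z xb = zb := by
    have hT : (0:ℝ) < 1 - ∑ j, zb (Sum.inl j) := by linarith
    have hexp : ∀ i, Real.exp (β * ((1/2) * (xb ⬝ᵥ (Q i).mulVec xb) + d i))
        = zb (Sum.inl i) / (1 - ∑ j, zb (Sum.inl j)) := by
      intro i
      have hc := hcrit1 i
      rw [conj_dot (hGsymm zb) (Q i) f, ← hxb] at hc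
      rw [hc]
      rw [show β * ((1/β) * Real.log (zb (Sum.inl i) / (1 - ∑ j, zb (Sum.inl j))))
        = Real.log (zb (Sum.inl i) / (1 - ∑ j, zb (Sum.inl j))) by field_simp]
      exact Real.exp_log (div_pos (hpos i) hT)
    have hSxb : (1 + ∑ j, Real.exp (β * ((1/2) * (xb ⬝ᵥ (Q j).mulVec xb) + d j)))
        = 1 / (1 - ∑ j, zb (Sum.inl j)) := by
      rw [Finset.sum_congr rfl (fun i _ => hexp i), ← Finset.sum_div]
      field_simp
      ring
    funext s
    cases s with
    | inl i =>
      simp only [hzdef, Sum.elim_inl]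
      rw [hexp i, hSxb]
      field_simp
    | inr i =>
      simp only [hzdef, Sum.elim_inr]
      have hc := hcrit2 i
      rw [conj_dot (hGsymm zb) (B i) f, ← hxb] at hc
      rw [hc]
      have hne := (hα i).ne'
      field_simp
  -- continuity of z
  have hqc : ∀ (M : Matrix (Fin n) (Fin n) ℝ),
      Continuous fun x : Fin n → ℝ => x ⬝ᵥ M.mulVec x := by
    intro M
    simp only [dotProduct, Matrix.mulVec]
    apply continuous_finset_sum
    intro i _
    exact (continuous_apply i).mul
      (continuous_finset_sum _ fun j _ => continuous_const.mul (continuous_apply j))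
  have hτc : ∀ i, Continuous fun x : Fin n → ℝ => z x (Sum.inl i) := by
    intro i
    simp only [hzdef, Sum.elim_inl]
    apply Continuous.div
    · exact Real.continuous_exp.comp
        (continuous_const.mul ((continuous_const.mul (hqc (Q i))).add continuous_const))
    · exact continuous_const.add (continuous_finset_sum _ fun j _ =>
        Real.continuous_exp.comp
          (continuous_const.mul ((continuous_const.mul (hqc (Q j))).add continuous_const)))
    · exact fun x => (hS0 x).ne'
  have hσc : ∀ i, Continuous fun x : Fin n → ℝ => z x (Sum.inr i) := by
    intro i
    simp only [hzdef, Sum.elim_inr]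
    exact continuous_const.mul ((continuous_const.mul (hqc (B i))).add continuous_const)
  have hzc : Continuous z := by
    apply continuous_pi
    intro s
    cases s with
    | inl i => exact hτc i
    | inr i => exact hσc i
  -- continuity of Ga ∘ z
  have hMc : Continuous fun x => Ga (z x) := by
    rw [hGa]
    apply continuous_matrix
    intro i j
    simp only [Matrix.add_apply, Matrix.sum_apply, Matrix.smul_apply, smul_eq_mul]
    exact ((continuous_const.add (continuous_finset_sum _ fun k _ =>
        (hτc k).mul continuous_const)).add
      (continuous_finset_sum _ fun k _ => (hσc k).mul continuous_const))
  -- eventually negative definite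
  have h0 : ∀ v : Fin n → ℝ, v ≠ 0 → v ⬝ᵥ ((fun x => Ga (z x)) xb).mulVec v < 0 := by
    simpa [hzxb] using hnegdef
  have hev1 := negdef_eventually hMc xb h0
  -- eventually Dual (z x) ≤ Dual zb
  have hmax' : ∀ᶠ ζ in nhds zb, ζ ∈ {ζ : (Fin p ⊕ Fin r) → ℝ |
      (∀ i, 0 < ζ (Sum.inl i)) ∧ (∑ i, ζ (Sum.inl i)) < 1 ∧
      (Ga ζ).det ≠ 0 ∧ ∀ x : Fin n → ℝ, x ≠ 0 → x ⬝ᵥ (Ga ζ).mulVec x < 0} →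
      Dual ζ ≤ Dual zb := by
    have : ∀ᶠ ζ in nhdsWithin zb _, Dual ζ ≤ Dual zb := hmax
    rwa [eventually_nhdsWithin_iff] at this
  have hzt : Filter.Tendsto z (nhds xb) (nhds zb) := by
    have := hzc.tendsto xb
    rwa [hzxb] at this
  have hev2 := hzt.eventually hmax'
  -- positivity and sum bound for z x
  have hzpos : ∀ (x : Fin n → ℝ) i, 0 < z x (Sum.inl i) := by
    intro x i
    simp only [hzdef, Sum.elim_inl]
    exact div_pos (Real.exp_pos _) (hS0 x)
  have hzsum : ∀ x : Fin n → ℝ, ∑ i, z x (Sum.inl i) < 1 := by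
    intro x
    simp only [hzdef, Sum.elim_inl]
    rw [← Finset.sum_div, div_lt_one (hS0 x)]
    have : (0:ℝ) < 1 := one_pos
    linarith [hS0 x]
  have hPxb : Prim xb = Dual zb := by
    rw [hPrimXi xb, hzxb, hDualXi]
  constructor
  · filter_upwards [hev1, hev2] with x hx1 hx2
    have hmem : z x ∈ {ζ : (Fin p ⊕ Fin r) → ℝ |
        (∀ i, 0 < ζ (Sum.inl i)) ∧ (∑ i, ζ (Sum.inl i)) < 1 ∧
        (Ga ζ).det ≠ 0 ∧ ∀ v : Fin n → ℝ, v ≠ 0 → v ⬝ᵥ (Ga ζ).mulVec v < 0} :=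
      ⟨hzpos x, hzsum x, negdef_det_ne_zero hx1, hx1⟩
    calc Prim x = Xi x (z x) := hPrimXi x
      _ ≤ Dual (z x) := hXile (z x) hx1 x
      _ ≤ Dual zb := hx2 hmem
      _ = Prim xb := hPxb.symm
  · exact hPxb
end

section
/- Existence condition for the quartic dual problem: Assume −λ₁ ≥ αc. Then there exists σ > −λ₁ satisfying the critical-point equation ½Σ_{i=1}^n f̂ᵢ²/(λᵢ+σ)² + c − σ/α = 0 if and only if Σ_{i=1}^k f̂ᵢ² ≠ 0 or ½Σ_{i=k+1}^n f̂ᵢ²/(λᵢ−λ₁)² + λ₁/α + c > 0. -/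
open Matrix

/-- Auxiliary: if the dual function is positive at some feasible point, it has a root. -/
lemma quartic_key {n : ℕ} (lam : Fin n → ℝ) (fhat : Fin n → ℝ) (lam1 : ℝ)
    (hlamge : ∀ i : Fin n, lam1 ≤ lam i)
    (α : ℝ) (hα : 0 < α) (c : ℝ) (a : ℝ) (ha : -lam1 < a)
    (hga : 0 < (1/2) * (∑ i, fhat i ^ 2 / (lam i + a) ^ 2) + c - a / α) :
    ∃ σ : ℝ, -lam1 < σ ∧ (1/2) * (∑ i, fhat i ^ 2 / (lam i + σ) ^ 2) + c - σ / α = 0 := by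
  set g : ℝ → ℝ := fun σ => (1/2) * (∑ i, fhat i ^ 2 / (lam i + σ) ^ 2) + c - σ / α with hg
  set S : ℝ := ∑ i, fhat i ^ 2 with hS
  have hS0 : 0 ≤ S := Finset.sum_nonneg fun i _ => sq_nonneg _
  set b : ℝ := max a (max (1 - lam1) (α * ((1/2) * S + c))) with hbdef
  have hab : a ≤ b := le_max_left _ _
  have hb1 : 1 - lam1 ≤ b := le_trans (le_max_left _ _) (le_max_right _ _)
  have hb2 : α * ((1/2) * S + c) ≤ b := le_trans (le_max_right _ _) (le_max_right _ _)
  have hbgt : -lam1 < b := lt_of_lt_of_le ha hab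
  have hgb : g b ≤ 0 := by
    have hterm : ∀ i : Fin n, fhat i ^ 2 / (lam i + b) ^ 2 ≤ fhat i ^ 2 := by
      intro i
      have h1 : (1:ℝ) ≤ lam i + b := by have := hlamge i; linarith
      have h2 : (1:ℝ) ≤ (lam i + b) ^ 2 := by nlinarith
      exact div_le_self (sq_nonneg _) h2
    have hsum : (∑ i, fhat i ^ 2 / (lam i + b) ^ 2) ≤ S :=
      Finset.sum_le_sum fun i _ => hterm i
    have hba : (1/2) * S + c ≤ b / α := (le_div_iff₀ hα).mpr (by linarith [hb2])
    simp only [hg]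
    linarith
  have hcont : ContinuousOn g (Set.Icc a b) := by
    apply ContinuousOn.sub
    · apply ContinuousOn.add
      · apply ContinuousOn.mul continuousOn_const
        apply continuousOn_finset_sum
        intro i _
        apply ContinuousOn.div continuousOn_const
        · exact ((continuous_const.add continuous_id).pow 2).continuousOn
        · intro σ hσ
          have h1 : -lam1 < σ := lt_of_lt_of_le ha hσ.1
          have h2 : 0 < lam i + σ := by have := hlamge i; linarith
          positivity
      · exact continuousOn_const
    · exact (continuous_id.div_const α).continuousOn
  have h0mem : (0:ℝ) ∈ Set.Icc (g b) (g a) := ⟨hgb, le_of_lt hga⟩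
  obtain ⟨σ, hσmem, hσeq⟩ := intermediate_value_Icc' hab hcont h0mem
  exact ⟨σ, lt_of_lt_of_le ha hσmem.1, hσeq⟩

/-- **Existence condition for the quartic dual problem** (Proposition 1 of Chen–Gao). -/
theorem quartic_existence
    {n : ℕ} (hn : 0 < n)
    (A : Matrix (Fin n) (Fin n) ℝ) (hA : A.IsSymm)
    (lam : Fin n → ℝ) (hsort : ∀ i j : Fin n, i ≤ j → lam i ≤ lam j)
    (U : Matrix (Fin n) (Fin n) ℝ) (hUorth : U * Uᵀ = 1)
    (hAeig : A = U * Matrix.diagonal lam * Uᵀ)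
    (f : Fin n → ℝ) (fhat : Fin n → ℝ) (hfhat : fhat = Uᵀ.mulVec f)
    (lam1 : ℝ) (hlam1 : lam1 = lam ⟨0, hn⟩)
    (k : ℕ) (hk0 : 0 < k) (hkn : k ≤ n)
    (heqk : ∀ i : Fin n, (i : ℕ) < k → lam i = lam1)
    (hltk : ∀ i : Fin n, k ≤ (i : ℕ) → lam1 < lam i)
    (α : ℝ) (hα : 0 < α) (c : ℝ) (hac : α * c ≤ -lam1) :
    (∃ σ : ℝ, -lam1 < σ ∧ (1/2) * (∑ i, fhat i ^ 2 / (lam i + σ) ^ 2) + c - σ / α = 0) ↔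
    ((∑ i ∈ Finset.univ.filter (fun i : Fin n => (i : ℕ) < k), fhat i ^ 2) ≠ 0 ∨
      0 < (1/2) * (∑ i ∈ Finset.univ.filter (fun i : Fin n => k ≤ (i : ℕ)),
            fhat i ^ 2 / (lam i - lam1) ^ 2) + lam1 / α + c) := by
  have hlamge : ∀ i : Fin n, lam1 ≤ lam i := by
    intro i
    rw [hlam1]
    exact hsort _ i (by simp [Fin.le_def])
  constructor
  · rintro ⟨σ, hσgt, hσeq⟩
    by_cases hSz : (∑ i ∈ Finset.univ.filter (fun i : Fin n => (i : ℕ) < k), fhat i ^ 2) = 0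
    · right
      have hzero : ∀ i ∈ Finset.univ.filter (fun i : Fin n => (i : ℕ) < k), fhat i ^ 2 = 0 :=
        (Finset.sum_eq_zero_iff_of_nonneg fun i _ => sq_nonneg _).mp hSz
      have hsplit : (∑ i, fhat i ^ 2 / (lam i + σ) ^ 2) =
          ∑ i ∈ Finset.univ.filter (fun i : Fin n => k ≤ (i : ℕ)),
            fhat i ^ 2 / (lam i + σ) ^ 2 := by
        rw [← Finset.sum_filter_add_sum_filter_not Finset.univ
            (fun i : Fin n => (i : ℕ) < k) (fun i => fhat i ^ 2 / (lam i + σ) ^ 2)]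
        have h1 : (∑ i ∈ Finset.univ.filter (fun i : Fin n => (i : ℕ) < k),
            fhat i ^ 2 / (lam i + σ) ^ 2) = 0 :=
          Finset.sum_eq_zero fun i hi => by rw [hzero i hi]; simp
        rw [h1, zero_add]
        simp [not_lt]
      have hineq : ∀ i ∈ Finset.univ.filter (fun i : Fin n => k ≤ (i : ℕ)),
          fhat i ^ 2 / (lam i + σ) ^ 2 ≤ fhat i ^ 2 / (lam i - lam1) ^ 2 := by
        intro i hi
        have hki : k ≤ (i : ℕ) := by simpa using hi
        have hlt := hltk i hki
        have h1 : 0 < lam i - lam1 := by linarith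
        have h2 : (lam i - lam1) ^ 2 ≤ (lam i + σ) ^ 2 := by nlinarith
        exact div_le_div_of_nonneg_left (sq_nonneg _) (by positivity) h2
      have hsum := Finset.sum_le_sum hineq
      have hσα : -(lam1 / α) < σ / α := by
        rw [← neg_div]
        exact (div_lt_div_iff_of_pos_right hα).mpr hσgt
      linarith [hsum, hσeq, hsplit]
    · exact Or.inl hSz
  · have hkey := quartic_key lam fhat lam1 hlamge α hα c
    rintro (hS | hL)
    · obtain ⟨i₀, hi₀mem, hfi₀⟩ := Finset.exists_ne_zero_of_sum_ne_zero hS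
      have hi₀k : (i₀ : ℕ) < k := by simpa using hi₀mem
      have hF : 0 < fhat i₀ ^ 2 := lt_of_le_of_ne (sq_nonneg _) (Ne.symm hfi₀)
      have hlami₀ : lam i₀ = lam1 := heqk i₀ hi₀k
      have h2 : Filter.Tendsto (fun σ : ℝ => (lam1 + σ) ^ 2)
          (nhdsWithin (-lam1) (Set.Ioi (-lam1))) (nhdsWithin 0 (Set.Ioi 0)) := by
        rw [tendsto_nhdsWithin_iff]
        constructor
        · have hc2 : Continuous (fun σ : ℝ => (lam1 + σ) ^ 2) := by continuity
          have h := hc2.tendsto (-lam1)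
          simpa using h.mono_left nhdsWithin_le_nhds
        · filter_upwards [self_mem_nhdsWithin] with σ hσ
          have hσ' : -lam1 < σ := hσ
          have hpos : 0 < lam1 + σ := by linarith
          simpa using pow_pos hpos 2
      have h3 := tendsto_inv_nhdsGT_zero.comp h2
      have h4 : Filter.Tendsto (fun σ : ℝ => (1/2) * fhat i₀ ^ 2 * ((lam1 + σ) ^ 2)⁻¹)
          (nhdsWithin (-lam1) (Set.Ioi (-lam1))) Filter.atTop :=
        h3.const_mul_atTop (by positivity)
      have h5 : Filter.Tendsto (fun σ : ℝ => c - σ / α)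
          (nhdsWithin (-lam1) (Set.Ioi (-lam1))) (nhds (c - (-lam1) / α)) := by
        have hc5 : Continuous (fun σ : ℝ => c - σ / α) := by continuity
        exact (hc5.tendsto (-lam1)).mono_left nhdsWithin_le_nhds
      have h6 : Filter.Tendsto
          (fun σ : ℝ => (1/2) * fhat i₀ ^ 2 * ((lam1 + σ) ^ 2)⁻¹ + (c - σ / α))
          (nhdsWithin (-lam1) (Set.Ioi (-lam1))) Filter.atTop :=
        h4.atTop_add h5
      have hev : ∀ᶠ σ in nhdsWithin (-lam1) (Set.Ioi (-lam1)),
          0 < (1/2) * (∑ i, fhat i ^ 2 / (lam i + σ) ^ 2) + c - σ / α := by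
        filter_upwards [h6.eventually_gt_atTop 0, self_mem_nhdsWithin] with σ hgt hσ
        have hσ' : -lam1 < σ := hσ
        have hsingle : fhat i₀ ^ 2 / (lam i₀ + σ) ^ 2 ≤ ∑ i, fhat i ^ 2 / (lam i + σ) ^ 2 :=
          Finset.single_le_sum (f := fun i => fhat i ^ 2 / (lam i + σ) ^ 2)
            (fun i _ => div_nonneg (sq_nonneg _) (sq_nonneg _)) (Finset.mem_univ i₀)
        rw [hlami₀, div_eq_mul_inv] at hsingle
        nlinarith [hsingle]
      obtain ⟨a, hga, hmem⟩ := (hev.and self_mem_nhdsWithin).exists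
      exact hkey a hmem hga
    · have hne : ∀ i ∈ Finset.univ.filter (fun i : Fin n => k ≤ (i : ℕ)),
          ((lam i + -lam1) ^ 2 : ℝ) ≠ 0 := by
        intro i hi
        have hki : k ≤ (i : ℕ) := by simpa using hi
        have := hltk i hki
        have : lam i + -lam1 ≠ 0 := by intro h; rw [add_neg_eq_zero] at h; linarith
        positivity
      have hhc : Filter.Tendsto (fun σ : ℝ =>
          (1/2) * (∑ i ∈ Finset.univ.filter (fun i : Fin n => k ≤ (i : ℕ)),
            fhat i ^ 2 / (lam i + σ) ^ 2) + c - σ / α) (nhds (-lam1))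
          (nhds ((1/2) * (∑ i ∈ Finset.univ.filter (fun i : Fin n => k ≤ (i : ℕ)),
            fhat i ^ 2 / (lam i + -lam1) ^ 2) + c - (-lam1) / α)) := by
        apply Filter.Tendsto.sub
        · apply Filter.Tendsto.add
          · apply Filter.Tendsto.const_mul
            apply tendsto_finset_sum
            intro i hi
            exact Filter.Tendsto.div tendsto_const_nhds
              ((tendsto_const_nhds.add Filter.tendsto_id).pow 2) (hne i hi)
          · exact tendsto_const_nhds
        · exact Filter.Tendsto.div_const Filter.tendsto_id α
      have h0 : 0 < (1/2) * (∑ i ∈ Finset.univ.filter (fun i : Fin n => k ≤ (i : ℕ)),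
          fhat i ^ 2 / (lam i + -lam1) ^ 2) + c - (-lam1) / α := by
        have hsums : (∑ i ∈ Finset.univ.filter (fun i : Fin n => k ≤ (i : ℕ)),
            fhat i ^ 2 / (lam i + -lam1) ^ 2) =
            ∑ i ∈ Finset.univ.filter (fun i : Fin n => k ≤ (i : ℕ)),
            fhat i ^ 2 / (lam i - lam1) ^ 2 := by
          apply Finset.sum_congr rfl
          intro i _
          rw [sub_eq_add_neg]
        rw [hsums]
        have hnd : (-lam1) / α = -(lam1 / α) := neg_div _ _
        rw [hnd]
        linarith
      have hev : ∀ᶠ σ in nhdsWithin (-lam1) (Set.Ioi (-lam1)),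
          0 < (1/2) * (∑ i, fhat i ^ 2 / (lam i + σ) ^ 2) + c - σ / α := by
        have hev0 := hhc.eventually (eventually_gt_nhds h0)
        filter_upwards [hev0.filter_mono nhdsWithin_le_nhds, self_mem_nhdsWithin] with σ hhσ hσ
        have hsub : (∑ i ∈ Finset.univ.filter (fun i : Fin n => k ≤ (i : ℕ)),
            fhat i ^ 2 / (lam i + σ) ^ 2) ≤ ∑ i, fhat i ^ 2 / (lam i + σ) ^ 2 :=
          Finset.sum_le_sum_of_subset_of_nonneg (Finset.filter_subset _ _)
            (fun i _ _ => div_nonneg (sq_nonneg _) (sq_nonneg _))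
        linarith
      obtain ⟨a, hga, hmem⟩ := (hev.and self_mem_nhdsWithin).exists
      exact hkey a hmem hga
end

section
/- Uniqueness and global optimality for the quartic dual problem: Assume −λ₁ ≥ αc. If σ̄ > −λ₁ satisfies the critical-point equation ½Σ_{i=1}^n f̂ᵢ²/(λᵢ+σ̄)² + c − σ̄/α = 0, then σ̄ is the unique such point in (−λ₁, +∞), and x̄ = (A + σ̄I)⁻¹f is a global minimizer of Π₁ on ℝⁿ. -/
open Matrix

set_option maxHeartbeats 1000000 in
/-- **Uniqueness and global optimality for the quartic dual problem**
(Proposition 1 of Chen–Gao). -/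
theorem quartic_uniqueness_global
    {n : ℕ} (hn : 0 < n)
    (A : Matrix (Fin n) (Fin n) ℝ) (hA : A.IsSymm)
    (lam : Fin n → ℝ) (hsort : ∀ i j : Fin n, i ≤ j → lam i ≤ lam j)
    (U : Matrix (Fin n) (Fin n) ℝ) (hUorth : U * Uᵀ = 1)
    (hAeig : A = U * Matrix.diagonal lam * Uᵀ)
    (f : Fin n → ℝ) (fhat : Fin n → ℝ) (hfhat : fhat = Uᵀ.mulVec f)
    (lam1 : ℝ) (hlam1 : lam1 = lam ⟨0, hn⟩)
    (k : ℕ) (hk0 : 0 < k) (hkn : k ≤ n)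
    (heqk : ∀ i : Fin n, (i : ℕ) < k → lam i = lam1)
    (hltk : ∀ i : Fin n, k ≤ (i : ℕ) → lam1 < lam i)
    (α : ℝ) (hα : 0 < α) (c : ℝ) (hac : α * c ≤ -lam1)
    (Pi1 : (Fin n → ℝ) → ℝ)
    (hPi1 : Pi1 = fun x : Fin n → ℝ => (1/2) * (x ⬝ᵥ A.mulVec x) - f ⬝ᵥ x
        + (α / 2) * ((1/2) * (x ⬝ᵥ x) + c) ^ 2)
    (sb : ℝ) (hsb : -lam1 < sb)
    (hcrit : (1/2) * (∑ i, fhat i ^ 2 / (lam i + sb) ^ 2) + c - sb / α = 0)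
    (xb : Fin n → ℝ) (hxb : xb = (A + sb • (1 : Matrix (Fin n) (Fin n) ℝ))⁻¹.mulVec f) :
    (∀ σ : ℝ, -lam1 < σ → (1/2) * (∑ i, fhat i ^ 2 / (lam i + σ) ^ 2) + c - σ / α = 0 → σ = sb) ∧
    (∀ x : Fin n → ℝ, Pi1 xb ≤ Pi1 x) := by
  have hlamge : ∀ i : Fin n, lam1 ≤ lam i := by
    intro i
    rw [hlam1]
    exact hsort _ _ (by simp [Fin.le_def])
  -- all eigenvalues shifted by any σ > -lam1 are positive
  have hpos : ∀ σ : ℝ, -lam1 < σ → ∀ i : Fin n, 0 < lam i + σ := by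
    intro σ hσ i
    have := hlamge i
    linarith
  -- strict monotonicity of the dual "gradient" : uniqueness
  have huniq : ∀ σ : ℝ, -lam1 < σ →
      (1/2) * (∑ i, fhat i ^ 2 / (lam i + σ) ^ 2) + c - σ / α = 0 → σ = sb := by
    have key : ∀ σ₁ σ₂ : ℝ, -lam1 < σ₁ → -lam1 < σ₂ → σ₁ < σ₂ →
        (1/2) * (∑ i, fhat i ^ 2 / (lam i + σ₁) ^ 2) + c - σ₁ / α = 0 →
        (1/2) * (∑ i, fhat i ^ 2 / (lam i + σ₂) ^ 2) + c - σ₂ / α = 0 → False := by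
      intro σ₁ σ₂ h1 h2 h12 e1 e2
      have hsum : (∑ i, fhat i ^ 2 / (lam i + σ₂) ^ 2) ≤
          ∑ i, fhat i ^ 2 / (lam i + σ₁) ^ 2 := by
        apply Finset.sum_le_sum
        intro i _
        have p1 := hpos σ₁ h1 i
        have p2 := hpos σ₂ h2 i
        apply div_le_div_of_nonneg_left (by positivity) (by positivity)
        nlinarith
      have hdiv : σ₁ / α < σ₂ / α := by
        rw [div_lt_div_iff₀ hα hα]
        nlinarith [mul_lt_mul_of_pos_right h12 hα]
      linarith
    intro σ hσ hcritσ
    rcases lt_trichotomy σ sb with h | h | h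
    · exact absurd (key σ sb hσ hsb h hcritσ hcrit) (fun h => h)
    · exact h
    · exact absurd (key sb σ hsb hσ h hcrit hcritσ) (fun h => h)
  refine ⟨huniq, ?_⟩
  -- Global optimality
  have hμpos : ∀ i : Fin n, 0 < lam i + sb := hpos sb hsb
  have hμne : ∀ i : Fin n, lam i + sb ≠ 0 := fun i => ne_of_gt (hμpos i)
  have hUl : Uᵀ * U = 1 := mul_eq_one_comm.mp hUorth
  -- matrix B = A + sb•1 and its inverse
  set D := Matrix.diagonal (fun i => lam i + sb) with hD
  set C := U * Matrix.diagonal (fun i => (lam i + sb)⁻¹) * Uᵀ with hC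
  have hsmul : (sb • (1 : Matrix (Fin n) (Fin n) ℝ)) =
      Matrix.diagonal (fun _ => sb) := by
    ext i j
    by_cases h : i = j <;> simp [h, Matrix.diagonal_apply, Matrix.one_apply]
  have hB : A + sb • (1 : Matrix (Fin n) (Fin n) ℝ) = U * D * Uᵀ := by
    have h1 : U * Matrix.diagonal (fun _ : Fin n => sb) * Uᵀ =
        sb • (1 : Matrix (Fin n) (Fin n) ℝ) := by
      rw [← hsmul]
      rw [Matrix.mul_smul, Matrix.smul_mul, Matrix.mul_one, hUorth]
    rw [hAeig, hD, ← h1]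
    rw [← Matrix.add_mul, ← Matrix.mul_add, Matrix.diagonal_add]
  have hBC : (A + sb • (1 : Matrix (Fin n) (Fin n) ℝ)) * C = 1 := by
    rw [hB, hC, hD]
    calc U * Matrix.diagonal (fun i => lam i + sb) * Uᵀ *
          (U * Matrix.diagonal (fun i => (lam i + sb)⁻¹) * Uᵀ)
        = U * Matrix.diagonal (fun i => lam i + sb) * (Uᵀ * U) *
          Matrix.diagonal (fun i => (lam i + sb)⁻¹) * Uᵀ := by
          noncomm_ring
      _ = U * (Matrix.diagonal (fun i => lam i + sb) *
          Matrix.diagonal (fun i => (lam i + sb)⁻¹)) * Uᵀ := by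
          rw [hUl, Matrix.mul_one]; noncomm_ring
      _ = 1 := by
          rw [Matrix.diagonal_mul_diagonal]
          have : (fun i => (lam i + sb) * (lam i + sb)⁻¹) = fun _ : Fin n => (1:ℝ) := by
            funext i; exact mul_inv_cancel₀ (hμne i)
          rw [this, Matrix.diagonal_one, Matrix.mul_one, hUorth]
  have hBinv : (A + sb • (1 : Matrix (Fin n) (Fin n) ℝ))⁻¹ = C :=
    Matrix.inv_eq_right_inv hBC
  -- eigen-coordinates of xb
  have hyb : Uᵀ.mulVec xb = fun i => fhat i / (lam i + sb) := by
    rw [hxb, hBinv, hC]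
    rw [Matrix.mulVec_mulVec]
    have : Uᵀ * (U * Matrix.diagonal (fun i => (lam i + sb)⁻¹) * Uᵀ)
        = Matrix.diagonal (fun i => (lam i + sb)⁻¹) * Uᵀ := by
      calc Uᵀ * (U * Matrix.diagonal (fun i => (lam i + sb)⁻¹) * Uᵀ)
          = (Uᵀ * U) * (Matrix.diagonal (fun i => (lam i + sb)⁻¹) * Uᵀ) := by noncomm_ring
        _ = _ := by rw [hUl, Matrix.one_mul]
    rw [this, ← Matrix.mulVec_mulVec]
    funext i
    simp [Matrix.mulVec_diagonal, ← hfhat, div_eq_inv_mul]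
  -- reduction of Pi1 to eigen-coordinates
  set G : (Fin n → ℝ) → ℝ := fun y =>
    (∑ i, ((1/2) * (lam i + sb) * y i ^ 2 - fhat i * y i))
      + ((α/2) * ((1/2) * (∑ i, y i ^ 2) + c) ^ 2 - sb * ((1/2) * ∑ i, y i ^ 2)) with hG
  have hdotU : ∀ v w : Fin n → ℝ, v ⬝ᵥ U.mulVec w = (Uᵀ.mulVec v) ⬝ᵥ w := by
    intro v w
    rw [Matrix.dotProduct_mulVec, Matrix.mulVec_transpose]
  have hPiG : ∀ x : Fin n → ℝ, Pi1 x = G (Uᵀ.mulVec x) := by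
    intro x
    set y := Uᵀ.mulVec x with hy
    have hxy : U.mulVec y = x := by
      rw [hy, Matrix.mulVec_mulVec, hUorth, Matrix.one_mulVec]
    have hAx : x ⬝ᵥ A.mulVec x = ∑ i, lam i * y i ^ 2 := by
      rw [hAeig]
      have : (U * Matrix.diagonal lam * Uᵀ).mulVec x
          = U.mulVec ((Matrix.diagonal lam).mulVec y) := by
        rw [Matrix.mulVec_mulVec, Matrix.mulVec_mulVec, Matrix.mul_assoc]
      rw [this, hdotU, ← hy]
      simp [Matrix.mulVec_diagonal, dotProduct]
      apply Finset.sum_congr rfl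
      intro i _
      ring
    have hxx : x ⬝ᵥ x = ∑ i, y i ^ 2 := by
      conv_lhs => rw [← hxy]
      rw [hdotU, Matrix.mulVec_mulVec, hUl, Matrix.one_mulVec]
      simp [dotProduct, sq]
    have hfx : f ⬝ᵥ x = fhat ⬝ᵥ y := by
      conv_lhs => rw [← hxy]
      rw [hdotU, hfhat]
    rw [hPi1, hG]
    simp only [hAx, hxx, hfx]
    rw [Finset.sum_sub_distrib]
    have h1 : ∑ i, (1/2) * (lam i + sb) * y i ^ 2
        = (1/2) * (∑ i, lam i * y i ^ 2) + (sb/2) * ∑ i, y i ^ 2 := by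
      rw [Finset.mul_sum, Finset.mul_sum, ← Finset.sum_add_distrib]
      apply Finset.sum_congr rfl
      intro i _
      ring
    have h2 : ∑ i, fhat i * y i = fhat ⬝ᵥ y := rfl
    rw [h1, h2]
    ring
  -- minimize G coordinatewise plus the radial part
  intro x
  rw [hPiG xb, hPiG x, hyb]
  set y := Uᵀ.mulVec x with hy
  set yb : Fin n → ℝ := fun i => fhat i / (lam i + sb) with hybdef
  rw [hG]
  have hquad : ∀ i : Fin n,
      (1/2) * (lam i + sb) * yb i ^ 2 - fhat i * yb i
        ≤ (1/2) * (lam i + sb) * y i ^ 2 - fhat i * y i := by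
    intro i
    have hp := hμpos i
    have hfb : (lam i + sb) * yb i = fhat i := by
      rw [hybdef]
      field_simp
    have hid : (1/2) * (lam i + sb) * y i ^ 2 - fhat i * y i
        - ((1/2) * (lam i + sb) * yb i ^ 2 - fhat i * yb i)
        = (1/2) * ((lam i + sb) * (y i - yb i) ^ 2) := by
      rw [← hfb]; ring
    nlinarith [mul_nonneg hp.le (sq_nonneg (y i - yb i))]
  have hsum : ∑ i, ((1/2) * (lam i + sb) * yb i ^ 2 - fhat i * yb i)
      ≤ ∑ i, ((1/2) * (lam i + sb) * y i ^ 2 - fhat i * y i) :=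
    Finset.sum_le_sum fun i _ => hquad i
  -- radial part
  set t : ℝ := (1/2) * ∑ i, y i ^ 2 with ht
  set tb : ℝ := (1/2) * ∑ i, yb i ^ 2 with htb
  have htbcrit : tb + c - sb / α = 0 := by
    rw [htb, hybdef]
    have : ∀ i : Fin n, (fhat i / (lam i + sb)) ^ 2 = fhat i ^ 2 / (lam i + sb) ^ 2 := by
      intro i; rw [div_pow]
    simp only [this]
    linarith [hcrit]
  have hsbα : sb = α * (tb + c) := by
    have : tb + c = sb / α := by linarith
    rw [this]
    field_simp
  have hrad : (α/2) * (tb + c) ^ 2 - sb * tb ≤ (α/2) * (t + c) ^ 2 - sb * t := by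
    have hid : (α/2) * (t + c) ^ 2 - sb * t - ((α/2) * (tb + c) ^ 2 - sb * tb)
        = (α/2) * (t - tb) ^ 2 := by
      rw [hsbα]; ring
    have h0 : 0 ≤ (α/2) * (t - tb) ^ 2 :=
      mul_nonneg (by linarith) (sq_nonneg _)
    linarith
  calc (∑ i, ((1/2) * (lam i + sb) * yb i ^ 2 - fhat i * yb i))
        + ((α/2) * ((1/2) * (∑ i, yb i ^ 2) + c) ^ 2 - sb * ((1/2) * ∑ i, yb i ^ 2))
      = (∑ i, ((1/2) * (lam i + sb) * yb i ^ 2 - fhat i * yb i))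
        + ((α/2) * (tb + c) ^ 2 - sb * tb) := by rw [htb]
    _ ≤ (∑ i, ((1/2) * (lam i + sb) * y i ^ 2 - fhat i * y i))
        + ((α/2) * (t + c) ^ 2 - sb * t) := add_le_add hsum hrad
    _ = _ := by rw [ht]
end

section
/- Existence condition for the minimax dual problem: Assume −1 < λ₁ < 0. Then there exists τ with max(0, −λ₁) < τ < 1, in fact τ ∈ (−λ₁, 1), satisfying the critical-point equation ½Σ_{i=1}^n f̂ᵢ²/(λᵢ+τ)² + d − (1/β)log(τ/(1−τ)) = 0 if and only if Σ_{i=1}^k f̂ᵢ² ≠ 0 or ½Σ_{i=k+1}^n f̂ᵢ²/(λᵢ−λ₁)² − (1/β)log(−λ₁/(1+λ₁)) + d > 0. -/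
open Matrix Filter Set Topology

set_option maxHeartbeats 1000000 in
/-- **Existence condition for the minimax dual problem** (Proposition 2 of Chen–Gao). -/
theorem minimax_existence
    {n : ℕ} (hn : 0 < n)
    (A : Matrix (Fin n) (Fin n) ℝ) (hA : A.IsSymm)
    (lam : Fin n → ℝ) (hsort : ∀ i j : Fin n, i ≤ j → lam i ≤ lam j)
    (U : Matrix (Fin n) (Fin n) ℝ) (hUorth : U * Uᵀ = 1)
    (hAeig : A = U * Matrix.diagonal lam * Uᵀ)
    (f : Fin n → ℝ) (fhat : Fin n → ℝ) (hfhat : fhat = Uᵀ.mulVec f)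
    (lam1 : ℝ) (hlam1 : lam1 = lam ⟨0, hn⟩)
    (k : ℕ) (hk0 : 0 < k) (hkn : k ≤ n)
    (heqk : ∀ i : Fin n, (i : ℕ) < k → lam i = lam1)
    (hltk : ∀ i : Fin n, k ≤ (i : ℕ) → lam1 < lam i)
    (β : ℝ) (hβ : 0 < β) (d : ℝ) (hlamlo : -1 < lam1) (hlamhi : lam1 < 0) :
    (∃ τ ∈ Set.Ioo (-lam1) 1, (1/2) * (∑ i, fhat i ^ 2 / (lam i + τ) ^ 2) + d - (1/β) * Real.log (τ / (1 - τ)) = 0) ↔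
    ((∑ i ∈ Finset.univ.filter (fun i : Fin n => (i : ℕ) < k), fhat i ^ 2) ≠ 0 ∨
      0 < (1/2) * (∑ i ∈ Finset.univ.filter (fun i : Fin n => k ≤ (i : ℕ)),
            fhat i ^ 2 / (lam i - lam1) ^ 2)
          - (1/β) * Real.log (-lam1 / (1 + lam1)) + d) := by
  have h0l : (0:ℝ) < -lam1 := by linarith
  have hl1 : -lam1 < 1 := by linarith
  have hβinv : (0:ℝ) < 1/β := by positivity
  have hge : ∀ i : Fin n, lam1 ≤ lam i := fun i => by
    rcases lt_or_ge (i:ℕ) k with h | h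
    · exact (heqk i h).ge
    · exact (hltk i h).le
  set S1 : Finset (Fin n) := Finset.univ.filter (fun i : Fin n => (i : ℕ) < k) with hS1
  set S2 : Finset (Fin n) := Finset.univ.filter (fun i : Fin n => k ≤ (i : ℕ)) with hS2
  have hsplit : ∀ F : Fin n → ℝ, ∑ i, F i = ∑ i ∈ S1, F i + ∑ i ∈ S2, F i := by
    intro F
    rw [← Finset.sum_filter_add_sum_filter_not Finset.univ (fun i : Fin n => (i:ℕ) < k) F]
    congr 1
    apply Finset.sum_congr _ (fun _ _ => rfl)
    ext i; simp [hS2, Finset.mem_filter, not_lt]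
  have hmemS1 : ∀ i ∈ S1, (i:ℕ) < k := fun i hi => (Finset.mem_filter.mp hi).2
  have hmemS2 : ∀ i ∈ S2, k ≤ (i:ℕ) := fun i hi => (Finset.mem_filter.mp hi).2
  set g : ℝ → ℝ := fun τ =>
    (1/2) * (∑ i, fhat i ^ 2 / (lam i + τ) ^ 2) + d - (1/β) * Real.log (τ / (1 - τ)) with hg
  set L : ℝ := (1/2) * (∑ i ∈ S2, fhat i ^ 2 / (lam i - lam1) ^ 2)
      - (1/β) * Real.log (-lam1 / (1 + lam1)) + d with hL
  set C : ℝ := ∑ i ∈ S1, fhat i ^ 2 with hC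
  have hCnonneg : 0 ≤ C := Finset.sum_nonneg fun i _ => sq_nonneg _
  -- positivity of shifted eigenvalues on the feasible set
  have hposi : ∀ τ ∈ Set.Ioo (-lam1) 1, ∀ i : Fin n, 0 < lam i + τ := by
    intro τ hτ i
    have := hge i; have := hτ.1; linarith
  -- auxiliary function dropping the first block
  set h2 : ℝ → ℝ := fun τ =>
    (1/2) * (∑ i ∈ S2, fhat i ^ 2 / (lam i + τ) ^ 2) + d - (1/β) * Real.log (τ / (1 - τ)) with hh2
  have hgsplit : ∀ τ : ℝ, g τ = (1/2) * (C / (lam1 + τ)^2) + h2 τ := by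
    intro τ
    have e1 : ∑ i ∈ S1, fhat i ^ 2 / (lam i + τ) ^ 2 = C / (lam1 + τ)^2 := by
      rw [hC, Finset.sum_div]
      exact Finset.sum_congr rfl fun i hi => by rw [heqk i (hmemS1 i hi)]
    simp only [hg, hh2, hsplit (fun i => fhat i ^ 2 / (lam i + τ) ^ 2), e1]
    ring
  -- continuity of g on the feasible interval
  have hcont : ContinuousOn g (Set.Ioo (-lam1) 1) := by
    apply ContinuousOn.sub
    · apply ContinuousOn.add _ continuousOn_const
      apply ContinuousOn.mul continuousOn_const
      apply continuousOn_finset_sum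
      intro i _
      apply ContinuousOn.div continuousOn_const
        (((continuous_const.add continuous_id).pow 2)).continuousOn
      intro τ hτ
      have := hposi τ hτ i
      exact pow_ne_zero 2 this.ne'
    · apply ContinuousOn.mul continuousOn_const
      apply ContinuousOn.log
      · apply ContinuousOn.div continuous_id.continuousOn
          ((continuous_const.sub continuous_id).continuousOn)
        intro τ hτ
        have : (0:ℝ) < 1 - τ := by have := hτ.2; simp only [Set.mem_Ioo] at hτ; linarith [hτ.2]
        exact this.ne'
      · intro τ hτ
        have h1 : 0 < τ := lt_trans h0l hτ.1
        have h2' : 0 < 1 - τ := by have := hτ.2; linarith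
        positivity
  -- the limit of h2 at -lam1 is L
  have ht2 : Tendsto h2 (𝓝 (-lam1)) (𝓝 L) := by
    have hsum : Tendsto (fun τ => ∑ i ∈ S2, fhat i ^ 2 / (lam i + τ) ^ 2) (𝓝 (-lam1))
        (𝓝 (∑ i ∈ S2, fhat i ^ 2 / (lam i - lam1) ^ 2)) := by
      apply tendsto_finset_sum
      intro i hi
      have hi' : 0 < lam i - lam1 := by have := hltk i (hmemS2 i hi); linarith
      have hne : lam i + -lam1 ≠ 0 := by intro h; nlinarith
      have hcval : Tendsto (fun τ : ℝ => (lam i + τ) ^ 2) (𝓝 (-lam1)) (𝓝 ((lam i + -lam1) ^ 2)) := by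
        have hcc : Continuous (fun τ : ℝ => (lam i + τ) ^ 2) := by continuity
        exact hcc.tendsto (-lam1)
      have h := Tendsto.div (tendsto_const_nhds (α := ℝ) (x := fhat i ^ 2)) hcval (pow_ne_zero 2 hne)
      have e : lam i + -lam1 = lam i - lam1 := by ring
      rw [e] at h
      exact h
    have hlog : Tendsto (fun τ : ℝ => Real.log (τ / (1 - τ))) (𝓝 (-lam1))
        (𝓝 (Real.log (-lam1 / (1 + lam1)))) := by
      have hden : ((1:ℝ) - -lam1) ≠ 0 := by intro h; nlinarith
      have harg : Tendsto (fun τ : ℝ => τ / (1 - τ)) (𝓝 (-lam1)) (𝓝 (-lam1 / (1 - -lam1))) :=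
        Tendsto.div (continuous_id.tendsto _) ((continuous_const.sub continuous_id).tendsto _) hden
      have hargne : (-lam1 / (1 - -lam1)) ≠ 0 := by
        have : (0:ℝ) < 1 - -lam1 := by linarith
        positivity
      have := (Real.continuousAt_log hargne).tendsto.comp harg
      have e : (1:ℝ) - -lam1 = 1 + lam1 := by ring
      rwa [e] at this
    have hT := ((hsum.const_mul (1/2)).add_const d).sub (hlog.const_mul (1/β))
    have he : (1/2) * (∑ i ∈ S2, fhat i ^ 2 / (lam i - lam1) ^ 2) + d
        - (1/β) * Real.log (-lam1 / (1 + lam1)) = L := by rw [hL]; ring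
    rw [he] at hT
    exact hT
  have hIoo_mem : Set.Ioo (-lam1) 1 ∈ 𝓝[>] (-lam1) := Ioo_mem_nhdsGT_of_mem ⟨le_rfl, hl1⟩
  have hEvIoo : ∀ᶠ τ in 𝓝[>] (-lam1), τ ∈ Set.Ioo (-lam1) 1 :=
    Filter.eventually_of_mem hIoo_mem fun τ hτ => hτ
  -- existence of a point where g is positive, under the RHS disjunction
  have key_a : (C ≠ 0 ∨ 0 < L) → ∃ a ∈ Set.Ioo (-lam1) 1, 0 < g a := by
    intro hcase
    have ht2' : Tendsto h2 (𝓝[>] (-lam1)) (𝓝 L) := ht2.mono_left nhdsWithin_le_nhds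
    rcases hcase with hCne | hLpos
    · -- first block nonzero: g blows up at -lam1
      have hCpos : 0 < C := lt_of_le_of_ne hCnonneg (Ne.symm hCne)
      have t0 : Tendsto (fun τ : ℝ => lam1 + τ) (𝓝[>] (-lam1)) (𝓝[>] 0) := by
        apply tendsto_nhdsWithin_of_tendsto_nhds_of_eventually_within
        · have : Tendsto (fun τ : ℝ => lam1 + τ) (𝓝 (-lam1)) (𝓝 (lam1 + -lam1)) :=
            (continuous_const.add continuous_id).tendsto _
          simpa using this.mono_left nhdsWithin_le_nhds
        · filter_upwards [self_mem_nhdsWithin] with τ hτ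
          have : -lam1 < τ := hτ
          simp only [Set.mem_Ioi]; linarith
      have t1 : Tendsto (fun τ : ℝ => (lam1 + τ)⁻¹) (𝓝[>] (-lam1)) atTop :=
        t0.inv_tendsto_nhdsGT_zero
      have t2 : Tendsto (fun τ : ℝ => (1/2) * (C / (lam1 + τ)^2)) (𝓝[>] (-lam1)) atTop := by
        have := (t1.atTop_mul_atTop₀ t1).const_mul_atTop (show (0:ℝ) < (1/2) * C by positivity)
        apply this.congr
        intro τ; simp only [div_eq_mul_inv, pow_two, mul_inv]; ring
      have tg : Tendsto g (𝓝[>] (-lam1)) atTop :=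
        (t2.atTop_add ht2').congr fun τ => (hgsplit τ).symm
      have := (tg.eventually_gt_atTop 0).and hEvIoo
      rcases this.exists with ⟨a, ha1, ha2⟩
      exact ⟨a, ha2, ha1⟩
    · -- L positive: h2 is eventually positive, and g ≥ h2
      have := (ht2'.eventually (eventually_gt_nhds hLpos)).and hEvIoo
      rcases this.exists with ⟨a, ha1, ha2⟩
      refine ⟨a, ha2, ?_⟩
      have hfirst : 0 ≤ (1/2) * (C / (lam1 + a)^2) := by positivity
      rw [hgsplit a]
      exact add_pos_of_nonneg_of_pos hfirst ha1
  -- from a positive point, intermediate value gives a root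
  have key_root : (∃ a ∈ Set.Ioo (-lam1) 1, 0 < g a) → ∃ τ ∈ Set.Ioo (-lam1) 1, g τ = 0 := by
    rintro ⟨a, haI, hga⟩
    -- g tends to -∞ at 1⁻
    have hsum1 : Tendsto (fun τ : ℝ => (1/2) * (∑ i, fhat i ^ 2 / (lam i + τ) ^ 2) + d) (𝓝 1)
        (𝓝 ((1/2) * (∑ i, fhat i ^ 2 / (lam i + 1) ^ 2) + d)) := by
      apply Tendsto.add_const
      apply Tendsto.const_mul
      apply tendsto_finset_sum
      intro i _
      apply Tendsto.div tendsto_const_nhds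
        (((continuous_const.add continuous_id).pow 2).tendsto _)
      have : 0 < lam i + 1 := by have := hge i; linarith
      exact pow_ne_zero 2 this.ne'
    have t3 : Tendsto (fun τ : ℝ => 1 - τ) (𝓝[<] (1:ℝ)) (𝓝[>] 0) := by
      apply tendsto_nhdsWithin_of_tendsto_nhds_of_eventually_within
      · have : Tendsto (fun τ : ℝ => 1 - τ) (𝓝 (1:ℝ)) (𝓝 (1 - 1)) :=
          (continuous_const.sub continuous_id).tendsto _
        simpa using this.mono_left nhdsWithin_le_nhds
      · filter_upwards [self_mem_nhdsWithin] with τ hτ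
        have : τ < 1 := hτ
        simp only [Set.mem_Ioi]; linarith
    have t4 : Tendsto (fun τ : ℝ => (1 - τ)⁻¹) (𝓝[<] (1:ℝ)) atTop := t3.inv_tendsto_nhdsGT_zero
    have t5 : Tendsto (fun τ : ℝ => τ * (1 - τ)⁻¹) (𝓝[<] (1:ℝ)) atTop :=
      Tendsto.pos_mul_atTop one_pos ((continuous_id.tendsto 1).mono_left nhdsWithin_le_nhds) t4
    have t6 : Tendsto (fun τ : ℝ => Real.log (τ / (1 - τ))) (𝓝[<] (1:ℝ)) atTop := by
      simpa [Function.comp_def, div_eq_mul_inv] using Real.tendsto_log_atTop.comp t5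
    have t7 : Tendsto (fun τ : ℝ => -((1/β) * Real.log (τ / (1 - τ)))) (𝓝[<] (1:ℝ)) atBot :=
      tendsto_neg_atTop_atBot.comp (t6.const_mul_atTop hβinv)
    have tg : Tendsto g (𝓝[<] (1:ℝ)) atBot := by
      have := (hsum1.mono_left nhdsWithin_le_nhds).add_atBot t7
      apply this.congr
      intro τ; simp only [hg]; ring
    have hIoo2 : Set.Ioo a 1 ∈ 𝓝[<] (1:ℝ) := Ioo_mem_nhdsLT_of_mem ⟨haI.2, le_rfl⟩
    have hEv2 : ∀ᶠ τ in 𝓝[<] (1:ℝ), τ ∈ Set.Ioo a 1 :=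
      Filter.eventually_of_mem hIoo2 fun τ hτ => hτ
    rcases ((tg.eventually_lt_atBot 0).and hEv2).exists with ⟨b, hgb, hbI⟩
    have hab : a ≤ b := hbI.1.le
    have hsub : Set.Icc a b ⊆ Set.Ioo (-lam1) 1 := fun x hx =>
      ⟨lt_of_lt_of_le haI.1 hx.1, lt_of_le_of_lt hx.2 hbI.2⟩
    have h0 : (0:ℝ) ∈ Set.Icc (g b) (g a) := ⟨hgb.le, hga.le⟩
    rcases intermediate_value_Icc' hab (hcont.mono hsub) h0 with ⟨τ, hτmem, hτ0⟩
    exact ⟨τ, hsub hτmem, hτ0⟩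
  -- main equivalence
  constructor
  · rintro ⟨τ0, hτ0I, hgτ0⟩
    by_cases hCne : C = 0
    · right
      have hCne' : ∑ i ∈ S1, fhat i ^ 2 = 0 := by rw [← hC]; exact hCne
      have hz : ∀ i ∈ S1, fhat i = 0 := by
        intro i hi
        have h0 := (Finset.sum_eq_zero_iff_of_nonneg (fun j _ => sq_nonneg (fhat j))).mp hCne' i hi
        exact pow_eq_zero_iff (by norm_num : (2:ℕ) ≠ 0) |>.mp h0
      have hfull : ∑ i, fhat i ^ 2 / (lam i + τ0) ^ 2
          = ∑ i ∈ S2, fhat i ^ 2 / (lam i + τ0) ^ 2 := by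
        rw [hsplit (fun i => fhat i ^ 2 / (lam i + τ0) ^ 2)]
        have : ∑ i ∈ S1, fhat i ^ 2 / (lam i + τ0) ^ 2 = 0 :=
          Finset.sum_eq_zero fun i hi => by rw [hz i hi]; simp
        rw [this, zero_add]
      have hτpos : 0 < τ0 := lt_trans h0l hτ0I.1
      have hτlt1 : τ0 < 1 := hτ0I.2
      have hgeq : (1/2) * (∑ i ∈ S2, fhat i ^ 2 / (lam i + τ0) ^ 2) + d
          - (1/β) * Real.log (τ0 / (1 - τ0)) = 0 := by
        rw [← hfull]; exact hgτ0
      have hsum_le : ∑ i ∈ S2, fhat i ^ 2 / (lam i + τ0) ^ 2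
          ≤ ∑ i ∈ S2, fhat i ^ 2 / (lam i - lam1) ^ 2 := by
        apply Finset.sum_le_sum
        intro i hi
        have h1 : 0 < lam i - lam1 := by have := hltk i (hmemS2 i hi); linarith
        have h2' : lam i - lam1 ≤ lam i + τ0 := by have := hτ0I.1; linarith
        rw [div_le_div_iff₀ (pow_pos (by linarith : (0:ℝ) < lam i + τ0) 2) (pow_pos h1 2)]
        have := pow_le_pow_left₀ h1.le h2' 2
        exact mul_le_mul_of_nonneg_left this (sq_nonneg (fhat i))
      have hlog_lt : Real.log (-lam1 / (1 + lam1)) < Real.log (τ0 / (1 - τ0)) := by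
        apply Real.log_lt_log (div_pos h0l (by linarith))
        rw [div_lt_div_iff₀ (by linarith) (by linarith)]
        nlinarith [hτ0I.1]
      have hmul := mul_lt_mul_of_pos_left hlog_lt hβinv
      have hmul2 := mul_le_mul_of_nonneg_left hsum_le (by norm_num : (0:ℝ) ≤ 1/2)
      rw [hL]
      linarith
    · exact Or.inl hCne
  · intro hcase
    exact key_root (key_a hcase)
end

section
/- Uniqueness and global optimality for the minimax dual problem: Assume −1 < λ₁ < 0. If τ̄ ∈ (−λ₁, 1) satisfies the critical-point equation ½Σ_{i=1}^n f̂ᵢ²/(λᵢ+τ̄)² + d − (1/β)log(τ̄/(1−τ̄)) = 0, then τ̄ is the unique such point in (−λ₁, 1), and x̄ = (A + τ̄I)⁻¹f is a global minimizer of Π₂ on ℝⁿ. -/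
open Matrix

set_option maxHeartbeats 1000000
lemma aux_fenchel {τ : ℝ} (h0 : 0 < τ) (h1 : τ < 1) (t : ℝ) :
    τ * t - (τ * Real.log τ + (1 - τ) * Real.log (1 - τ)) ≤ Real.log (1 + Real.exp t) := by
  have h1' : 0 < 1 - τ := by linarith
  have hexp : 0 < Real.exp t := Real.exp_pos t
  have amgm := Real.geom_mean_le_arith_mean2_weighted (le_of_lt h0) (le_of_lt h1')
      (le_of_lt (div_pos hexp h0)) (le_of_lt (one_div_pos.mpr h1')) (by ring)
  have hrhs : τ * (Real.exp t / τ) + (1 - τ) * (1 / (1 - τ)) = Real.exp t + 1 := by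
    field_simp
  have hL : (0:ℝ) < (Real.exp t / τ) ^ τ * (1 / (1 - τ)) ^ (1 - τ) := by positivity
  have amgm2 : (Real.exp t / τ) ^ τ * (1 / (1 - τ)) ^ (1 - τ) ≤ Real.exp t + 1 := by
    rw [← hrhs]; exact amgm
  have hle := Real.log_le_log hL amgm2
  rw [Real.log_mul (by positivity) (by positivity),
      Real.log_rpow (by positivity), Real.log_rpow (by positivity),
      Real.log_div (ne_of_gt hexp) (ne_of_gt h0), Real.log_exp,
      one_div, Real.log_inv] at hle
  have hc : Real.exp t + 1 = 1 + Real.exp t := by ring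
  rw [hc] at hle
  nlinarith [hle]

lemma aux_fenchel_eq {τ : ℝ} (h0 : 0 < τ) (h1 : τ < 1) :
    Real.log (1 + Real.exp (Real.log (τ / (1 - τ)))) =
      τ * Real.log (τ / (1 - τ)) - (τ * Real.log τ + (1 - τ) * Real.log (1 - τ)) := by
  have h1' : 0 < 1 - τ := by linarith
  rw [Real.exp_log (div_pos h0 h1')]
  have h : 1 + τ / (1 - τ) = (1 - τ)⁻¹ := by field_simp; ring
  rw [h, Real.log_inv, Real.log_div (ne_of_gt h0) (ne_of_gt h1')]
  ring

/-- **Uniqueness and global optimality for the minimax dual problem**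
(Proposition 2 of Chen–Gao). -/
theorem minimax_uniqueness_global
    {n : ℕ} (hn : 0 < n)
    (A : Matrix (Fin n) (Fin n) ℝ) (hA : A.IsSymm)
    (lam : Fin n → ℝ) (hsort : ∀ i j : Fin n, i ≤ j → lam i ≤ lam j)
    (U : Matrix (Fin n) (Fin n) ℝ) (hUorth : U * Uᵀ = 1)
    (hAeig : A = U * Matrix.diagonal lam * Uᵀ)
    (f : Fin n → ℝ) (fhat : Fin n → ℝ) (hfhat : fhat = Uᵀ.mulVec f)
    (lam1 : ℝ) (hlam1 : lam1 = lam ⟨0, hn⟩)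
    (k : ℕ) (hk0 : 0 < k) (hkn : k ≤ n)
    (heqk : ∀ i : Fin n, (i : ℕ) < k → lam i = lam1)
    (hltk : ∀ i : Fin n, k ≤ (i : ℕ) → lam1 < lam i)
    (β : ℝ) (hβ : 0 < β) (d : ℝ) (hlamlo : -1 < lam1) (hlamhi : lam1 < 0)
    (Pi2 : (Fin n → ℝ) → ℝ)
    (hPi2 : Pi2 = fun x : Fin n → ℝ => (1/2) * (x ⬝ᵥ A.mulVec x) - f ⬝ᵥ x
        + (1/β) * Real.log (1 + Real.exp (β * ((1/2) * (x ⬝ᵥ x) + d))))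
    (tb : ℝ) (htb : tb ∈ Set.Ioo (-lam1) 1)
    (hcrit : (1/2) * (∑ i, fhat i ^ 2 / (lam i + tb) ^ 2) + d - (1/β) * Real.log (tb / (1 - tb)) = 0)
    (xb : Fin n → ℝ) (hxb : xb = (A + tb • (1 : Matrix (Fin n) (Fin n) ℝ))⁻¹.mulVec f) :
    (∀ τ ∈ Set.Ioo (-lam1) 1, (1/2) * (∑ i, fhat i ^ 2 / (lam i + τ) ^ 2) + d - (1/β) * Real.log (τ / (1 - τ)) = 0 → τ = tb) ∧
    (∀ x : Fin n → ℝ, Pi2 xb ≤ Pi2 x) := by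
  obtain ⟨htb1, htb2⟩ := htb
  have htb0 : 0 < tb := lt_trans (by linarith) htb1
  have htb1' : 0 < 1 - tb := by linarith
  have hlam_le : ∀ i : Fin n, lam1 ≤ lam i := by
    intro i
    rw [hlam1]
    exact hsort ⟨0, hn⟩ i (by simp [Fin.le_def])
  have hpos : ∀ i : Fin n, 0 < lam i + tb := fun i => by
    have := hlam_le i; linarith
  -- strict monotonicity of the dual derivative
  have key : ∀ a b : ℝ, -lam1 < a → a < b → b < 1 →
      (1/2) * (∑ i, fhat i ^ 2 / (lam i + b) ^ 2) + d - (1/β) * Real.log (b / (1 - b)) <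
      (1/2) * (∑ i, fhat i ^ 2 / (lam i + a) ^ 2) + d - (1/β) * Real.log (a / (1 - a)) := by
    intro a b ha hab hb1
    have ha0 : 0 < a := lt_trans (by linarith) ha
    have hb0 : 0 < b := lt_trans ha0 hab
    have ha1 : a < 1 := lt_trans hab hb1
    have hsum : (∑ i, fhat i ^ 2 / (lam i + b) ^ 2) ≤ ∑ i, fhat i ^ 2 / (lam i + a) ^ 2 := by
      apply Finset.sum_le_sum
      intro i _
      have h1 : 0 < lam i + a := by have := hlam_le i; linarith
      have h2 : lam i + a < lam i + b := by linarith
      apply div_le_div_of_nonneg_left (by positivity) (by positivity)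
      nlinarith
    have hlog : Real.log (a / (1 - a)) < Real.log (b / (1 - b)) := by
      apply Real.log_lt_log (div_pos ha0 (by linarith))
      rw [div_lt_div_iff₀ (by linarith) (by linarith)]
      nlinarith
    have hβ' : 0 < 1/β := by positivity
    have := mul_lt_mul_of_pos_left hlog hβ'
    linarith
  constructor
  · intro τ hτ hτcrit
    obtain ⟨hτ1, hτ2⟩ := hτ
    rcases lt_trichotomy τ tb with h | h | h
    · exfalso; have := key τ tb hτ1 h htb2; rw [hτcrit, hcrit] at this; exact lt_irrefl 0 this
    · exact h
    · exfalso; have := key tb τ htb1 h hτ2; rw [hτcrit, hcrit] at this; exact lt_irrefl 0 this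
  · -- global optimality
    have hUtU : Uᵀ * U = 1 := mul_eq_one_comm.mp hUorth
    set D : Matrix (Fin n) (Fin n) ℝ := Matrix.diagonal (fun i => lam i + tb) with hD
    set N : Matrix (Fin n) (Fin n) ℝ := U * Matrix.diagonal (fun i => (lam i + tb)⁻¹) * Uᵀ with hN
    set M : Matrix (Fin n) (Fin n) ℝ := A + tb • (1 : Matrix (Fin n) (Fin n) ℝ) with hM
    have hDe : Matrix.diagonal lam + tb • (1 : Matrix (Fin n) (Fin n) ℝ) = D := by
      ext i j
      rcases eq_or_ne i j with rfl | h
      · simp [hD]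
      · simp [hD, Matrix.diagonal_apply_ne _ h, Matrix.one_apply_ne h]
    have hMeq : M = U * D * Uᵀ := by
      rw [hM, hAeig, ← hDe]
      have h1 : tb • (1 : Matrix (Fin n) (Fin n) ℝ) = U * (tb • (1 : Matrix (Fin n) (Fin n) ℝ)) * Uᵀ := by
        rw [Matrix.mul_smul, Matrix.mul_one, Matrix.smul_mul, hUorth]
      rw [Matrix.mul_add U, Matrix.add_mul, ← h1]
    have hMN : M * N = 1 := by
      rw [hMeq, hN]
      calc U * D * Uᵀ * (U * Matrix.diagonal (fun i => (lam i + tb)⁻¹) * Uᵀ)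
          = U * D * (Uᵀ * U) * Matrix.diagonal (fun i => (lam i + tb)⁻¹) * Uᵀ := by
            noncomm_ring
        _ = U * (D * Matrix.diagonal (fun i => (lam i + tb)⁻¹)) * Uᵀ := by
            rw [hUtU, Matrix.mul_one]; noncomm_ring
        _ = 1 := by
            rw [hD, Matrix.diagonal_mul_diagonal]
            have : (fun i => (lam i + tb) * (lam i + tb)⁻¹) = fun _ : Fin n => (1:ℝ) := by
              funext i; exact mul_inv_cancel₀ (ne_of_gt (hpos i))
            rw [this, Matrix.diagonal_one, Matrix.mul_one, hUorth]
    have hMinv : M⁻¹ = N := Matrix.inv_eq_right_inv hMN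
    have hxbN : xb = N.mulVec f := by rw [hxb, ← hMinv]
    have hMxb : M.mulVec xb = f := by
      rw [hxbN, Matrix.mulVec_mulVec, hMN, Matrix.one_mulVec]
    -- symmetry of M
    have hMsymm : Mᵀ = M := by
      rw [hM, Matrix.transpose_add, hA.eq, Matrix.transpose_smul, Matrix.transpose_one]
    have hdotsymm : ∀ a b : Fin n → ℝ, a ⬝ᵥ M.mulVec b = b ⬝ᵥ M.mulVec a := by
      intro a b
      rw [Matrix.dotProduct_mulVec, ← Matrix.mulVec_transpose, hMsymm, dotProduct_comm]
    -- quadratic form nonneg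
    have hPSD : ∀ y : Fin n → ℝ, 0 ≤ y ⬝ᵥ M.mulVec y := by
      intro y
      have : y ⬝ᵥ M.mulVec y = (Uᵀ.mulVec y) ⬝ᵥ D.mulVec (Uᵀ.mulVec y) := by
        rw [hMeq]
        rw [← Matrix.mulVec_mulVec, ← Matrix.mulVec_mulVec]
        rw [Matrix.dotProduct_mulVec (v := y) (A := U)]
        rw [← Matrix.mulVec_transpose]
      rw [this]
      rw [dotProduct]
      apply Finset.sum_nonneg
      intro i _
      rw [Matrix.mulVec_diagonal]
      have := hpos i
      have h2 : (Uᵀ.mulVec y i) * ((lam i + tb) * Uᵀ.mulVec y i) = (lam i + tb) * (Uᵀ.mulVec y i)^2 := by ring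
      rw [h2]
      positivity
    -- norm transfer
    have hnorm : ∀ y : Fin n → ℝ, y ⬝ᵥ y = (Uᵀ.mulVec y) ⬝ᵥ (Uᵀ.mulVec y) := by
      intro y
      rw [Matrix.dotProduct_mulVec, ← Matrix.mulVec_transpose, Matrix.transpose_transpose,
        Matrix.mulVec_mulVec, hUorth, Matrix.one_mulVec]
    -- Uᵀ xb
    have hUz : Uᵀ.mulVec xb = fun i => (lam i + tb)⁻¹ * fhat i := by
      rw [hxbN, hN, Matrix.mulVec_mulVec]
      have : Uᵀ * (U * Matrix.diagonal (fun i => (lam i + tb)⁻¹) * Uᵀ)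
          = Matrix.diagonal (fun i => (lam i + tb)⁻¹) * Uᵀ := by
        rw [← Matrix.mul_assoc, ← Matrix.mul_assoc, hUtU, Matrix.one_mul]
      rw [this, ← Matrix.mulVec_mulVec, ← hfhat]
      funext i
      rw [Matrix.mulVec_diagonal]
    have hxbnorm : xb ⬝ᵥ xb = ∑ i, fhat i ^ 2 / (lam i + tb) ^ 2 := by
      rw [hnorm xb, hUz, dotProduct]
      apply Finset.sum_congr rfl
      intro i _
      have := hpos i
      field_simp
    -- the shifted quadratic Q
    set c : ℝ := -(tb * Real.log tb + (1 - tb) * Real.log (1 - tb)) with hc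
    set Q : (Fin n → ℝ) → ℝ := fun x => (1/2) * (x ⬝ᵥ M.mulVec x) - f ⬝ᵥ x + tb * d + c / β with hQ
    -- Q x ≤ Pi2 x for all x
    have hQle : ∀ x : Fin n → ℝ, Q x ≤ Pi2 x := by
      intro x
      rw [hPi2, hQ]
      simp only
      have hfen := aux_fenchel htb0 htb2 (β * ((1/2) * (x ⬝ᵥ x) + d))
      have hquad : x ⬝ᵥ M.mulVec x = x ⬝ᵥ A.mulVec x + tb * (x ⬝ᵥ x) := by
        rw [hM, Matrix.add_mulVec, dotProduct_add, Matrix.smul_mulVec,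
          Matrix.one_mulVec, dotProduct_smul]
        simp [smul_eq_mul]
      rw [hquad]
      have hβ' : 0 < 1/β := by positivity
      have h1 := mul_le_mul_of_nonneg_left hfen (le_of_lt hβ')
      have hexpand : (1/β) * (tb * (β * ((1/2) * (x ⬝ᵥ x) + d)) - (tb * Real.log tb + (1 - tb) * Real.log (1 - tb)))
          = tb * ((1/2) * (x ⬝ᵥ x) + d) + c / β := by
        field_simp
        ring
      rw [hexpand] at h1
      linarith
    -- Pi2 xb = Q xb
    have hseq : β * ((1/2) * (xb ⬝ᵥ xb) + d) = Real.log (tb / (1 - tb)) := by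
      rw [hxbnorm]
      have : (1/2) * (∑ i, fhat i ^ 2 / (lam i + tb) ^ 2) + d = (1/β) * Real.log (tb / (1 - tb)) := by
        linarith
      rw [this]
      field_simp
    have hPi2xb : Pi2 xb = Q xb := by
      rw [hPi2, hQ]
      simp only
      rw [hseq, aux_fenchel_eq htb0 htb2]
      have hquad : xb ⬝ᵥ M.mulVec xb = xb ⬝ᵥ A.mulVec xb + tb * (xb ⬝ᵥ xb) := by
        rw [hM, Matrix.add_mulVec, dotProduct_add, Matrix.smul_mulVec,
          Matrix.one_mulVec, dotProduct_smul]
        simp [smul_eq_mul]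
      rw [hquad, ← hseq]
      have hβne : β ≠ 0 := ne_of_gt hβ
      field_simp
      ring
    -- Q xb ≤ Q x
    have hQmin : ∀ x : Fin n → ℝ, Q xb ≤ Q x := by
      intro x
      have hpsd := hPSD (x - xb)
      have hexp : (x - xb) ⬝ᵥ M.mulVec (x - xb)
          = x ⬝ᵥ M.mulVec x - 2 * (xb ⬝ᵥ M.mulVec x) + xb ⬝ᵥ M.mulVec xb := by
        rw [Matrix.mulVec_sub, sub_dotProduct, dotProduct_sub,
          dotProduct_sub, hdotsymm x xb]
        ring
      have hfx : f ⬝ᵥ x = xb ⬝ᵥ M.mulVec x := by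
        rw [dotProduct_comm, ← hMxb, hdotsymm]
      have hfxb : f ⬝ᵥ xb = xb ⬝ᵥ M.mulVec xb := by
        rw [dotProduct_comm, ← hMxb]
      rw [hQ]
      simp only
      rw [hfx, hfxb]
      linarith [hpsd, hexp]
    intro x
    calc Pi2 xb = Q xb := hPi2xb
      _ ≤ Q x := hQmin x
      _ ≤ Pi2 x := hQle x
end
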